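/- arXiv:2410.10769 — 3 statements merged into one kernel-verified Lean document; each statement's English description precedes it below -/
import Mathlib

section
/- Let t* ∈ (0,∞], let (r,ℓ) be a C¹ solution on [0,t*)×ℝ of the diagonal system ∂ₜr + k(r−ℓ)·∂ₓr = 0, ∂ₜℓ − k(r−ℓ)·∂ₓℓ = 0, with initial data r(0,x) = r₀(x), ℓ(0,x) = ℓ₀(x) = −r₀(x), where r₀ is C¹. Let x₁ : [0,t*)×ℝ → ℝ be C¹ with continuous mixed second partial derivatives, satisfying ∂ₜx₁(t,α) = k(r(t,x₁(t,α)) − ℓ(t,x₁(t,α))) and x₁(0,α) = α; let x₂ be the analogous backward family with ∂ₜx₂(t,β) = −k(r(t,x₂(t,β)) − ℓ(t,x₂(t,β))), x₂(0,β) = β. Then the infinitesimal compression ratios c₁(t,α) := ∂x₁/∂α and c₂(t,β) := ∂x₂/∂β satisfy: c₁(t,α) = √( k(r₀(α) − ℓ(t,x₁(t,α))) / k(2r₀(α)) ) · { 1 + r₀'(α)·√(k(2r₀(α))) · ∫₀ᵗ f( r₀(α) − ℓ(τ, x₁(τ,α)) ) dτ } and c₂(t,β) = √( k(r(t,x₂(t,β))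 − ℓ₀(β)) / k(2r₀(β)) ) · { 1 + ℓ₀'(β)·√(k(2r₀(β))) · ∫₀ᵗ f( r(τ, x₂(τ,β)) − ℓ₀(β) ) dτ }, where f(η) := k'(η)/√(k(η)). -/
open Filter

/-- The primitive `L` of the wave velocity `Q(ξ) = √(1+ξ²)` with `L 0 = 0`. -/
noncomputable def L (u : ℝ) : ℝ := (u * Real.sqrt (1 + u ^ 2) + Real.arsinh u) / 2

/-- The function `f(η) := k'(η)/√(k(η))`. -/
noncomputable def fk (k : ℝ → ℝ) (η : ℝ) : ℝ := deriv k η / Real.sqrt (k η)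

open Set MeasureTheory intervalIntegral Topology

/-- constancy with derivative only on the open interval -/
lemma constAux {f : ℝ → ℝ} {t : ℝ} (ht : 0 < t) (hf : ContinuousOn f (Icc 0 t))
    (hd : ∀ s ∈ Ioo 0 t, HasDerivAt f 0 s) : f t = f 0 := by
  have key : ∀ a ∈ Ioo (0:ℝ) t, ∀ b ∈ Ioo (0:ℝ) t, a ≤ b → f b = f a := by
    intro a ha b hb hab
    have h1 : ContinuousOn f (Icc a b) := hf.mono (Icc_subset_Icc ha.1.le hb.2.le)
    have h2 : ∀ x ∈ Ico a b, HasDerivWithinAt f 0 (Ici x) x := by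
      intro x hx
      exact (hd x ⟨lt_of_lt_of_le ha.1 hx.1, lt_of_lt_of_le hx.2 hb.2.le⟩).hasDerivWithinAt
    exact constant_of_has_deriv_right_zero h1 h2 b (right_mem_Icc.2 hab)
  have hmid : (t/2) ∈ Ioo (0:ℝ) t := ⟨by linarith, by linarith⟩
  have key2 : ∀ b ∈ Ioo (0:ℝ) t, f b = f (t/2) := by
    intro b hb
    rcases le_total b (t/2) with h | h
    · exact (key b hb _ hmid h).symm
    · exact key _ hmid b hb h
  have hne0 : (𝓝[Ioo (0:ℝ) t] (0:ℝ)).NeBot := by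
    refine mem_closure_iff_nhdsWithin_neBot.mp ?_
    rw [closure_Ioo ht.ne]
    exact ⟨le_refl 0, ht.le⟩
  have hnet : (𝓝[Ioo (0:ℝ) t] t).NeBot := by
    refine mem_closure_iff_nhdsWithin_neBot.mp ?_
    rw [closure_Ioo ht.ne]
    exact ⟨ht.le, le_refl t⟩
  have hc0 : Tendsto f (𝓝[Ioo (0:ℝ) t] 0) (𝓝 (f 0)) :=
    ((hf 0 ⟨le_refl 0, ht.le⟩).mono Ioo_subset_Icc_self).tendsto
  have hct : Tendsto f (𝓝[Ioo (0:ℝ) t] t) (𝓝 (f t)) :=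
    ((hf t ⟨ht.le, le_refl t⟩).mono Ioo_subset_Icc_self).tendsto
  have hcon0 : Tendsto f (𝓝[Ioo (0:ℝ) t] 0) (𝓝 (f (t/2))) := by
    refine Tendsto.congr' ?_ tendsto_const_nhds
    filter_upwards [self_mem_nhdsWithin] with b hb using (key2 b hb).symm
  have hcont : Tendsto f (𝓝[Ioo (0:ℝ) t] t) (𝓝 (f (t/2))) := by
    refine Tendsto.congr' ?_ tendsto_const_nhds
    filter_upwards [self_mem_nhdsWithin] with b hb using (key2 b hb).symm
  have e0 : f 0 = f (t/2) := tendsto_nhds_unique hc0 hcon0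
  have et : f t = f (t/2) := tendsto_nhds_unique hct hcont
  rw [e0, et]

lemma constOn {f : ℝ → ℝ} {t : ℝ} (hf : ContinuousOn f (Icc 0 t))
    (hd : ∀ s ∈ Ioo 0 t, HasDerivAt f 0 s) : ∀ s ∈ Icc 0 t, f s = f 0 := by
  intro s hs
  rcases eq_or_lt_of_le hs.1 with h | h
  · rw [← h]
  · exact constAux h (hf.mono (Icc_subset_Icc_right hs.2))
      (fun u hu => hd u ⟨hu.1, lt_of_lt_of_le hu.2 hs.2⟩)

/-- FTC with derivative only on the open interval -/
lemma ftcAux {f g : ℝ → ℝ} {t : ℝ} (ht : 0 < t) (hf : ContinuousOn f (Icc 0 t))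
    (hg : ContinuousOn g (Icc 0 t))
    (hd : ∀ s ∈ Ioo 0 t, HasDerivAt f (g s) s) :
    f t = f 0 + ∫ τ in (0:ℝ)..t, g τ := by
  have huIcc : uIcc (0:ℝ) t = Icc 0 t := uIcc_of_le ht.le
  have hgi : IntervalIntegrable g volume 0 t := by
    apply ContinuousOn.intervalIntegrable; rwa [huIcc]
  have hprim : ContinuousOn (fun u => ∫ τ in (0:ℝ)..u, g τ) (Icc 0 t) := by
    have := continuousOn_primitive_interval' hgi (by rw [huIcc]; exact ⟨le_refl 0, ht.le⟩)
    rwa [huIcc] at this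
  set F : ℝ → ℝ := fun u => f u - ∫ τ in (0:ℝ)..u, g τ with hF
  have hFc : ContinuousOn F (Icc 0 t) := hf.sub hprim
  have hFd : ∀ s ∈ Ioo (0:ℝ) t, HasDerivAt F 0 s := by
    intro s hs
    have hgi' : IntervalIntegrable g volume 0 s :=
      hgi.mono_set (by rw [huIcc, uIcc_of_le hs.1.le]; exact Icc_subset_Icc_right hs.2.le)
    have hca : ContinuousAt g s :=
      (hg s ⟨hs.1.le, hs.2.le⟩).continuousAt (Icc_mem_nhds hs.1 hs.2)
    have hmeas : StronglyMeasurableAtFilter g (𝓝 s) :=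
      ⟨Icc 0 t, Icc_mem_nhds hs.1 hs.2, (hg.mono (le_refl _)).aestronglyMeasurable measurableSet_Icc⟩
    have hI : HasDerivAt (fun u => ∫ τ in (0:ℝ)..u, g τ) (g s) s :=
      integral_hasDerivAt_right hgi' hmeas hca
    simpa using (hd s hs).fun_sub hI
  have := constAux ht hFc hFd
  simp only [hF, intervalIntegral.integral_same, sub_zero] at this
  linarith [this]

theorem fwd (tstar : EReal)
    (k : ℝ → ℝ) (hk1 : ContDiff ℝ 1 k) (hkge : ∀ η, 1 ≤ k η)
    (r l : ℝ → ℝ → ℝ)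
    (hrl : ContDiffOn ℝ 1 (fun p : ℝ × ℝ => (r p.1 p.2, l p.1 p.2))
      {p : ℝ × ℝ | 0 ≤ p.1 ∧ (p.1 : EReal) < tstar})
    (hsys : ∀ t x : ℝ, 0 ≤ t → (t : EReal) < tstar →
      deriv (fun s => r s x) t + k (r t x - l t x) * deriv (fun y => r t y) x = 0 ∧
      deriv (fun s => l s x) t - k (r t x - l t x) * deriv (fun y => l t y) x = 0)
    (r₀ : ℝ → ℝ) (hr₀ : ContDiff ℝ 1 r₀)
    (hir : ∀ x, r 0 x = r₀ x) (hil : ∀ x, l 0 x = -(r₀ x))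
    (x₁ : ℝ → ℝ → ℝ)
    (hode : ∀ (α t : ℝ), 0 ≤ t → (t : EReal) < tstar →
      HasDerivAt (fun s => x₁ s α) (k (r t (x₁ t α) - l t (x₁ t α))) t)
    (h0 : ∀ α, x₁ 0 α = α)
    (hC : ContDiffOn ℝ 1 (fun p : ℝ × ℝ => x₁ p.1 p.2)
      {p : ℝ × ℝ | 0 ≤ p.1 ∧ (p.1 : EReal) < tstar}) :
    ∀ t α : ℝ, 0 ≤ t → (t : EReal) < tstar →
      deriv (fun a => x₁ t a) α =
        Real.sqrt (k (r₀ α - l t (x₁ t α)) / k (2 * r₀ α)) *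
          (1 + deriv r₀ α * Real.sqrt (k (2 * r₀ α)) *
            ∫ τ in (0 : ℝ)..t, fk k (r₀ α - l τ (x₁ τ α))) := by
  intro t α ht0 htlt
  have hkpos : ∀ η, 0 < k η := fun η => lt_of_lt_of_le one_pos (hkge η)
  have hksq : ∀ η, 0 < Real.sqrt (k η) := fun η => Real.sqrt_pos.2 (hkpos η)
  -- case t = 0
  rcases eq_or_lt_of_le ht0 with h | htpos
  · subst h
    have e1 : (fun a => x₁ 0 a) = fun a => a := funext h0
    have e2 : r₀ α - l 0 (x₁ 0 α) = 2 * r₀ α := by rw [h0, hil]; ring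
    rw [e1, deriv_id'', e2, intervalIntegral.integral_same, mul_zero, add_zero, mul_one,
      div_self (hkpos (2 * r₀ α)).ne', Real.sqrt_one]
  -- main case
  set S : Set (ℝ × ℝ) := {p : ℝ × ℝ | 0 ≤ p.1 ∧ (p.1 : EReal) < tstar} with hSdef
  set U : Set (ℝ × ℝ) := {p : ℝ × ℝ | 0 < p.1 ∧ (p.1 : EReal) < tstar} with hUdef
  have hUopen : IsOpen U := by
    have h1 : IsOpen {p : ℝ × ℝ | 0 < p.1} := isOpen_lt continuous_const continuous_fst
    have h2 : IsOpen {p : ℝ × ℝ | (p.1 : EReal) < tstar} :=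
      isOpen_lt (continuous_coe_real_ereal.comp continuous_fst) continuous_const
    exact h1.inter h2
  have hUS : U ⊆ S := fun p hp => ⟨hp.1.le, hp.2⟩
  have hSnhds : ∀ p : ℝ × ℝ, 0 < p.1 → (p.1 : EReal) < tstar → S ∈ 𝓝 p := by
    intro p h1 h2
    exact mem_of_superset (hUopen.mem_nhds ⟨h1, h2⟩) hUS
  have hsub : ∀ s : ℝ, s ≤ t → (s : EReal) < tstar :=
    fun s hs => lt_of_le_of_lt (EReal.coe_le_coe_iff.2 hs) htlt
  have hmemS : ∀ s x : ℝ, 0 ≤ s → s ≤ t → ((s, x) : ℝ × ℝ) ∈ S :=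
    fun s x h1 h2 => ⟨h1, hsub s h2⟩
  have hmemU : ∀ s x : ℝ, 0 < s → s ≤ t → ((s, x) : ℝ × ℝ) ∈ U :=
    fun s x h1 h2 => ⟨h1, hsub s h2⟩
  have hconv : Convex ℝ S := by
    intro p hp q hq a b ha hb hab
    constructor
    · have : (0:ℝ) ≤ a * p.1 + b * q.1 :=
        add_nonneg (mul_nonneg ha hp.1) (mul_nonneg hb hq.1)
      simpa [sub_eq_add_neg, add_comm] using this
    · have h1 : (a • p + b • q).1 = a * p.1 + b * q.1 := rfl
      rw [h1]
      have hle : a * p.1 + b * q.1 ≤ max p.1 q.1 := by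
        have e1 := le_max_left p.1 q.1
        have e2 := le_max_right p.1 q.1
        calc a * p.1 + b * q.1 ≤ a * max p.1 q.1 + b * max p.1 q.1 := by
              gcongr
          _ = max p.1 q.1 := by rw [← add_mul, hab, one_mul]
      calc ((a * p.1 + b * q.1 : ℝ) : EReal) ≤ ((max p.1 q.1 : ℝ) : EReal) :=
            EReal.coe_le_coe_iff.2 hle
        _ < tstar := by
            rcases max_cases p.1 q.1 with ⟨h, _⟩ | ⟨h, _⟩ <;> rw [h]
            · exact hp.2
            · exact hq.2
  have hudS : UniqueDiffOn ℝ S := by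
    apply uniqueDiffOn_convex hconv
    exact ⟨(t, 0), interior_maximal hUS hUopen (hmemU t 0 htpos le_rfl)⟩
  -- basic functions on the strip
  set R : ℝ × ℝ → ℝ := fun p => r p.1 p.2 with hRdef
  set Ll : ℝ × ℝ → ℝ := fun p => l p.1 p.2 with hLdef
  set X : ℝ × ℝ → ℝ := fun p => x₁ p.1 p.2 with hXdef
  set K : ℝ × ℝ → ℝ := fun p => k (R p - Ll p) with hKdef
  have hR : ContDiffOn ℝ 1 R S := contDiff_fst.comp_contDiffOn hrl
  have hL : ContDiffOn ℝ 1 Ll S := contDiff_snd.comp_contDiffOn hrl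
  have hKc : ContDiffOn ℝ 1 K S := hk1.comp_contDiffOn (hR.sub hL)
  -- full Fréchet derivatives at interior points
  have hfd : ∀ f : ℝ × ℝ → ℝ, ContDiffOn ℝ 1 f S → ∀ p : ℝ × ℝ, p ∈ U →
      HasFDerivAt f (fderivWithin ℝ f S p) p := by
    intro f hf p hp
    have hnp : S ∈ 𝓝 p := hSnhds p hp.1 hp.2
    have h1 : DifferentiableAt ℝ f p :=
      ((hf.differentiableOn one_ne_zero) p (hUS hp)).differentiableAt hnp
    rw [fderivWithin_of_mem_nhds hnp]
    exact h1.hasFDerivAt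
  -- time-sections and space-sections of derivatives at interior points
  have hsecT : ∀ f : ℝ × ℝ → ℝ, ContDiffOn ℝ 1 f S → ∀ s x : ℝ, 0 < s → s ≤ t →
      HasDerivAt (fun u => f (u, x)) (fderivWithin ℝ f S (s, x) (1, 0)) s := by
    intro f hf s x h1 h2
    have := (hfd f hf (s, x) (hmemU s x h1 h2)).comp_hasDerivAt s
      ((hasDerivAt_id s).prodMk (hasDerivAt_const s x))
    simpa [Function.comp_def] using this
  have hsecX : ∀ f : ℝ × ℝ → ℝ, ContDiffOn ℝ 1 f S → ∀ s x : ℝ, 0 < s → s ≤ t →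
      HasDerivAt (fun y => f (s, y)) (fderivWithin ℝ f S (s, x) (0, 1)) x := by
    intro f hf s x h1 h2
    have := (hfd f hf (s, x) (hmemU s x h1 h2)).comp_hasDerivAt x
      ((hasDerivAt_const x s).prodMk (hasDerivAt_id x))
    simpa [Function.comp_def] using this
  -- splitting a directional derivative
  have hsplit : ∀ (D : ℝ × ℝ →L[ℝ] ℝ) (v : ℝ),
      D (1, v) = D (1, 0) + v * D (0, 1) := by
    intro D v
    have : ((1 : ℝ), v) = (1, 0) + v • ((0 : ℝ), (1 : ℝ)) := by
      simp [Prod.ext_iff]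
    rw [this, map_add, D.map_smul, smul_eq_mul]
  -- characteristic curves: basic facts for any starting point a
  have hcurved : ∀ a s : ℝ, 0 ≤ s → s ≤ t → HasDerivAt (fun u => x₁ u a) (K (s, x₁ s a)) s := by
    intro a s h1 h2
    exact hode a s h1 (hsub s h2)
  have hcurvec : ∀ a : ℝ, ContinuousOn (fun u => x₁ u a) (Icc 0 t) :=
    fun a s hs => ((hcurved a s hs.1 hs.2).continuousAt).continuousWithinAt
  have hmaps : ∀ a : ℝ, MapsTo (fun u => ((u, x₁ u a) : ℝ × ℝ)) (Icc 0 t) S :=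
    fun a s hs => hmemS s _ hs.1 hs.2
  have hcurvePc : ∀ a : ℝ, ContinuousOn (fun u => ((u, x₁ u a) : ℝ × ℝ)) (Icc 0 t) :=
    fun a => continuousOn_id.prodMk (hcurvec a)
  have hcompc : ∀ f : ℝ × ℝ → ℝ, ContinuousOn f S → ∀ a : ℝ,
      ContinuousOn (fun u => f (u, x₁ u a)) (Icc 0 t) :=
    fun f hf a => hf.comp (hcurvePc a) (hmaps a)
  have hcompd : ∀ f : ℝ × ℝ → ℝ, ContDiffOn ℝ 1 f S → ∀ a : ℝ, ∀ s ∈ Ioc (0:ℝ) t,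
      HasDerivAt (fun u => f (u, x₁ u a))
        (fderivWithin ℝ f S (s, x₁ s a) (1, K (s, x₁ s a))) s := by
    intro f hf a s hs
    have h1 : HasDerivAt (fun u => ((u, x₁ u a) : ℝ × ℝ)) (1, K (s, x₁ s a)) s :=
      (hasDerivAt_id s).prodMk (hcurved a s hs.1.le hs.2)
    have := (hfd f hf (s, x₁ s a) (hmemU s _ hs.1 hs.2)).comp_hasDerivAt s h1
    simpa [Function.comp_def] using this
  -- r is constant along forward characteristics
  have hrconst : ∀ a : ℝ, ∀ s ∈ Icc (0:ℝ) t, r s (x₁ s a) = r₀ a := by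
    intro a s hs
    have hc : ContinuousOn (fun u => R (u, x₁ u a)) (Icc 0 t) := hcompc R hR.continuousOn a
    have hd : ∀ u ∈ Ioo (0:ℝ) t, HasDerivAt (fun u => R (u, x₁ u a)) 0 u := by
      intro u hu
      have h3 := hcompd R hR a u ⟨hu.1, hu.2.le⟩
      have h4 : fderivWithin ℝ R S (u, x₁ u a) (1, K (u, x₁ u a)) = 0 := by
        rw [hsplit]
        have e1 : fderivWithin ℝ R S (u, x₁ u a) (1, 0) = deriv (fun v => r v (x₁ u a)) u :=
          (hsecT R hR u (x₁ u a) hu.1 hu.2.le).deriv.symm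
        have e2 : fderivWithin ℝ R S (u, x₁ u a) (0, 1) = deriv (fun y => r u y) (x₁ u a) :=
          (hsecX R hR u (x₁ u a) hu.1 hu.2.le).deriv.symm
        rw [e1, e2]
        exact (hsys u (x₁ u a) hu.1.le (hsub u hu.2.le)).1
      rw [h4] at h3; exact h3
    have := constOn hc hd s hs
    simpa [hRdef, h0, hir] using this
  -- η along the characteristic through α, and its ODE
  set η : ℝ → ℝ := fun s => r₀ α - l s (x₁ s α) with hηdef
  have hηc : ContinuousOn η (Icc 0 t) := by
    have := hcompc Ll hL.continuousOn α
    exact continuousOn_const.sub this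
  have hηd : ∀ s ∈ Ioo (0:ℝ) t,
      HasDerivAt η (-(2 * k (η s) * deriv (fun y => l s y) (x₁ s α))) s := by
    intro s hs
    have h3 := hcompd Ll hL α s ⟨hs.1, hs.2.le⟩
    have e1 : deriv (fun v => l v (x₁ s α)) s = fderivWithin ℝ Ll S (s, x₁ s α) (1, 0) :=
      (hsecT Ll hL s (x₁ s α) hs.1 hs.2.le).deriv
    have e2 : deriv (fun y => l s y) (x₁ s α) = fderivWithin ℝ Ll S (s, x₁ s α) (0, 1) :=
      (hsecX Ll hL s (x₁ s α) hs.1 hs.2.le).deriv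
    have e3 := (hsys s (x₁ s α) hs.1.le (hsub s hs.2.le)).2
    have e5 : k (r s (x₁ s α) - l s (x₁ s α)) = k (η s) := by
      rw [hrconst α s ⟨hs.1.le, hs.2.le⟩]
    have h4 : fderivWithin ℝ Ll S (s, x₁ s α) (1, K (s, x₁ s α)) =
        2 * k (η s) * deriv (fun y => l s y) (x₁ s α) := by
      rw [hsplit, ← e1, ← e2]
      have e6 : K (s, x₁ s α) = k (η s) := e5
      rw [e6]
      rw [e5] at e3
      linarith
    rw [h4] at h3
    have := (hasDerivAt_const s (r₀ α)).fun_sub h3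
    simpa using this
  -- the compression ratio along our characteristic
  set cc : ℝ → ℝ := fun s => deriv (fun a => x₁ s a) α with hccdef
  have hcc0 : cc 0 = 1 := by
    show deriv (fun a => x₁ 0 a) α = 1
    have e : (fun a => x₁ 0 a) = fun a => a := funext h0
    rw [e, deriv_id'']
  -- derivative fields (continuous on S)
  have hDKc : ContinuousOn (fun p : ℝ × ℝ => fderivWithin ℝ K S p ((0:ℝ), (1:ℝ))) S :=
    (hKc.continuousOn_fderivWithin hudS le_rfl).clm_apply continuousOn_const
  have hDXc : ContinuousOn (fun p : ℝ × ℝ => fderivWithin ℝ X S p ((0:ℝ), (1:ℝ))) S :=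
    (hC.continuousOn_fderivWithin hudS le_rfl).clm_apply continuousOn_const
  set F' : ℝ → ℝ → ℝ := fun τ a =>
    fderivWithin ℝ K S (τ, x₁ τ a) ((0:ℝ), (1:ℝ)) * fderivWithin ℝ X S (τ, a) ((0:ℝ), (1:ℝ))
    with hF'def
  -- joint continuity of F' on the compact block
  set C2 : Set (ℝ × ℝ) := Icc (0:ℝ) t ×ˢ Icc (α - 1) (α + 1) with hC2def
  have hC2S : C2 ⊆ S := fun p hp => ⟨hp.1.1, hsub p.1 hp.1.2⟩
  have hφc : ContinuousOn (fun p : ℝ × ℝ => ((p.1, X p) : ℝ × ℝ)) C2 :=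
    continuous_fst.continuousOn.prodMk (hC.continuousOn.mono hC2S)
  have hφmaps : MapsTo (fun p : ℝ × ℝ => ((p.1, X p) : ℝ × ℝ)) C2 S :=
    fun p hp => ⟨hp.1.1, hsub p.1 hp.1.2⟩
  have hF'c2 : ContinuousOn (fun p : ℝ × ℝ => F' p.1 p.2) C2 := by
    apply ContinuousOn.mul
    · exact (hDKc.comp hφc hφmaps)
    · exact hDXc.mono hC2S
  obtain ⟨B, hB⟩ := (isCompact_Icc.prod isCompact_Icc).exists_bound_of_continuousOn hF'c2
  -- continuity of τ ↦ F' τ α on [0,t]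
  have hhc : ContinuousOn (fun τ => F' τ α) (Icc 0 t) := by
    have : MapsTo (fun τ : ℝ => ((τ, α) : ℝ × ℝ)) (Icc 0 t) C2 := by
      intro τ hτ
      exact ⟨hτ, by constructor <;> [linarith; linarith]⟩
    exact hF'c2.comp (continuousOn_id.prodMk continuousOn_const) this
  -- a.e. strong measurability helper
  have haesm : ∀ s : ℝ, 0 ≤ s → s ≤ t → ∀ g : ℝ → ℝ, ContinuousOn g (Icc 0 t) →
      AEStronglyMeasurable g (volume.restrict (Set.uIoc 0 s)) := by
    intro s hs0 hst g hg
    rw [uIoc_of_le hs0]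
    exact (hg.mono (fun u hu => ⟨hu.1.le, le_trans hu.2 hst⟩)).aestronglyMeasurable
      measurableSet_Ioc
  -- a-derivative of x₁ at interior times
  have hXa : ∀ s ∈ Ioc (0:ℝ) t, ∀ a : ℝ,
      HasDerivAt (fun a' => x₁ s a') (fderivWithin ℝ X S (s, a) ((0:ℝ), (1:ℝ))) a :=
    fun s hs a => hsecX X hC s a hs.1 hs.2
  -- a-derivative of K ∘ characteristic at interior times
  have hKa : ∀ s ∈ Ioc (0:ℝ) t, ∀ a : ℝ,
      HasDerivAt (fun a' => K (s, x₁ s a')) (F' s a) a := by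
    intro s hs a
    have inner := hXa s hs a
    have pair : HasDerivAt (fun a' => ((s, x₁ s a') : ℝ × ℝ))
        ((0:ℝ), fderivWithin ℝ X S (s, a) ((0:ℝ), (1:ℝ))) a :=
      (hasDerivAt_const a s).prodMk inner
    have outer : HasFDerivAt K (fderivWithin ℝ K S (s, x₁ s a)) (s, x₁ s a) :=
      hfd K hKc (s, x₁ s a) (hmemU s _ hs.1 hs.2)
    have comp := outer.comp_hasDerivAt a pair
    have hv : (fderivWithin ℝ K S (s, x₁ s a))
        ((0:ℝ), fderivWithin ℝ X S (s, a) ((0:ℝ), (1:ℝ))) = F' s a := by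
      have e : ((0:ℝ), fderivWithin ℝ X S (s, a) ((0:ℝ), (1:ℝ)))
          = (fderivWithin ℝ X S (s, a) ((0:ℝ), (1:ℝ))) • ((0:ℝ), (1:ℝ)) := by
        simp [Prod.ext_iff]
      rw [e, (fderivWithin ℝ K S (s, x₁ s a)).map_smul, smul_eq_mul, hF'def, mul_comm]
    rw [hv] at comp
    exact comp
  -- integral equation for characteristics
  have hinteq : ∀ a : ℝ, ∀ u ∈ Icc (0:ℝ) t, x₁ u a = a + ∫ τ in (0:ℝ)..u, K (τ, x₁ τ a) := by
    intro a u hu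
    rcases eq_or_lt_of_le hu.1 with h | h
    · rw [← h]
      simp [h0]
    · have hfc : ContinuousOn (fun v => x₁ v a) (Icc 0 u) :=
        (hcurvec a).mono (Icc_subset_Icc_right hu.2)
      have hgc : ContinuousOn (fun τ => K (τ, x₁ τ a)) (Icc 0 u) :=
        (hcompc K hKc.continuousOn a).mono (Icc_subset_Icc_right hu.2)
      have hd : ∀ v ∈ Ioo (0:ℝ) u, HasDerivAt (fun v => x₁ v a) (K (v, x₁ v a)) v :=
        fun v hv => hcurved a v hv.1.le (le_trans hv.2.le hu.2)
      have := ftcAux h hfc hgc hd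
      rw [this, h0]
  -- derivative of the integral term in the parameter a (dominated convergence)
  have hkey : ∀ s ∈ Ioc (0:ℝ) t,
      HasDerivAt (fun a => ∫ τ in (0:ℝ)..s, K (τ, x₁ τ a)) (∫ τ in (0:ℝ)..s, F' τ α) α := by
    intro s hs
    have hsub' : Icc (0:ℝ) s ⊆ Icc 0 t := Icc_subset_Icc_right hs.2
    have hIocsub : Ioc (0:ℝ) s ⊆ Ioc 0 t := Ioc_subset_Ioc_right hs.2
    refine (intervalIntegral.hasDerivAt_integral_of_dominated_loc_of_deriv_le
      (F := fun a τ => K (τ, x₁ τ a)) (F' := fun a τ => F' τ a) (bound := fun _ => B)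
      (s := Metric.ball α 1) (Metric.ball_mem_nhds α one_pos) ?_ ?_ ?_ ?_ ?_ ?_).2
    · filter_upwards with a
      exact haesm s hs.1.le hs.2 _ (hcompc K hKc.continuousOn a)
    · apply ContinuousOn.intervalIntegrable
      rw [uIcc_of_le hs.1.le]
      exact (hcompc K hKc.continuousOn α).mono hsub'
    · exact haesm s hs.1.le hs.2 _ hhc
    · apply ae_of_all
      intro τ hτ a ha
      rw [uIoc_of_le hs.1.le] at hτ
      have hmem : ((τ, a) : ℝ × ℝ) ∈ C2 := by
        refine ⟨⟨hτ.1.le, le_trans hτ.2 hs.2⟩, ?_⟩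
        have := mem_ball_iff_norm.mp ha
        rw [Real.norm_eq_abs, abs_lt] at this
        exact ⟨by linarith [this.1], by linarith [this.2]⟩
      exact hB (τ, a) hmem
    · exact intervalIntegrable_const
    · apply ae_of_all
      intro τ hτ a ha
      rw [uIoc_of_le hs.1.le] at hτ
      exact hKa τ (hIocsub hτ) a
  -- the integral formula for cc
  have hccEq : ∀ s ∈ Icc (0:ℝ) t, cc s = 1 + ∫ τ in (0:ℝ)..s, F' τ α := by
    intro s hs
    rcases eq_or_lt_of_le hs.1 with h | h
    · rw [← h]
      simp [hcc0]
    · have e : (fun a => x₁ s a) = fun a => a + ∫ τ in (0:ℝ)..s, K (τ, x₁ τ a) :=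
        funext (fun a => hinteq a s hs)
      have hda : HasDerivAt (fun a => a + ∫ τ in (0:ℝ)..s, K (τ, x₁ τ a))
          (1 + ∫ τ in (0:ℝ)..s, F' τ α) α :=
        (hasDerivAt_id α).add (hkey s ⟨h, hs.2⟩)
      show deriv (fun a => x₁ s a) α = 1 + ∫ τ in (0:ℝ)..s, F' τ α
      rw [e]
      exact hda.deriv
  -- integrability and regularity of cc
  have hh_int : IntervalIntegrable (fun τ => F' τ α) volume 0 t := by
    apply ContinuousOn.intervalIntegrable
    rw [uIcc_of_le ht0]
    exact hhc
  have hprim : ContinuousOn (fun u => ∫ τ in (0:ℝ)..u, F' τ α) (Icc 0 t) := by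
    have := continuousOn_primitive_interval' hh_int
      (by rw [uIcc_of_le ht0]; exact ⟨le_refl 0, ht0⟩)
    rwa [uIcc_of_le ht0] at this
  have hccc : ContinuousOn cc (Icc 0 t) :=
    (continuousOn_const.add hprim).congr hccEq
  have hccd : ∀ s ∈ Ioo (0:ℝ) t, HasDerivAt cc (F' s α) s := by
    intro s hs
    have hint' : IntervalIntegrable (fun τ => F' τ α) volume 0 s :=
      hh_int.mono_set (by rw [uIcc_of_le ht0, uIcc_of_le hs.1.le]
                          exact Icc_subset_Icc_right hs.2.le)
    have hca : ContinuousAt (fun τ => F' τ α) s :=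
      (hhc s ⟨hs.1.le, hs.2.le⟩).continuousAt (Icc_mem_nhds hs.1 hs.2)
    have hmeas : StronglyMeasurableAtFilter (fun τ => F' τ α) (𝓝 s) :=
      ⟨Icc 0 t, Icc_mem_nhds hs.1 hs.2, hhc.aestronglyMeasurable measurableSet_Icc⟩
    have h1 : HasDerivAt (fun u => (1:ℝ) + ∫ τ in (0:ℝ)..u, F' τ α) (F' s α) s := by
      have := integral_hasDerivAt_right hint' hmeas hca
      simpa using (hasDerivAt_const s (1:ℝ)).fun_add this
    apply h1.congr_of_eventuallyEq
    filter_upwards [Icc_mem_nhds hs.1 hs.2] with u hu using hccEq u hu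
  -- pointwise relations at interior times
  have e_rx : ∀ s ∈ Ioo (0:ℝ) t,
      deriv (fun y => r s y) (x₁ s α) * cc s = deriv r₀ α := by
    intro s hs
    have hrs : HasDerivAt (fun y => r s y) (fderivWithin ℝ R S (s, x₁ s α) ((0:ℝ),(1:ℝ)))
        (x₁ s α) := hsecX R hR s (x₁ s α) hs.1 hs.2.le
    have hin := hXa s ⟨hs.1, hs.2.le⟩ α
    have pair : HasDerivAt (fun a' => ((s, x₁ s a') : ℝ × ℝ))
        ((0:ℝ), fderivWithin ℝ X S (s, α) ((0:ℝ), (1:ℝ))) α :=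
      (hasDerivAt_const α s).prodMk hin
    have outer : HasFDerivAt R (fderivWithin ℝ R S (s, x₁ s α)) (s, x₁ s α) :=
      hfd R hR (s, x₁ s α) (hmemU s _ hs.1 hs.2.le)
    have comp := outer.comp_hasDerivAt α pair
    have hv : (fderivWithin ℝ R S (s, x₁ s α))
        ((0:ℝ), fderivWithin ℝ X S (s, α) ((0:ℝ), (1:ℝ)))
        = deriv (fun y => r s y) (x₁ s α) * cc s := by
      have e : ((0:ℝ), fderivWithin ℝ X S (s, α) ((0:ℝ), (1:ℝ)))
          = (fderivWithin ℝ X S (s, α) ((0:ℝ), (1:ℝ))) • ((0:ℝ), (1:ℝ)) := by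
        simp [Prod.ext_iff]
      rw [e, (fderivWithin ℝ R S (s, x₁ s α)).map_smul, smul_eq_mul]
      have e1 : cc s = fderivWithin ℝ X S (s, α) ((0:ℝ),(1:ℝ)) := hin.deriv
      have e2 : deriv (fun y => r s y) (x₁ s α)
          = fderivWithin ℝ R S (s, x₁ s α) ((0:ℝ),(1:ℝ)) := hrs.deriv
      rw [e1, e2]; ring
    rw [hv] at comp
    have efun : (fun a => r s (x₁ s a)) = fun a => r₀ a :=
      funext (fun a => hrconst a s ⟨hs.1.le, hs.2.le⟩)
    have comp' : HasDerivAt (fun a => r s (x₁ s a))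
        (deriv (fun y => r s y) (x₁ s α) * cc s) α := comp
    rw [efun] at comp'
    exact comp'.deriv.symm
  have e_Kx : ∀ s ∈ Ioo (0:ℝ) t,
      F' s α = deriv k (η s) *
        (deriv (fun y => r s y) (x₁ s α) - deriv (fun y => l s y) (x₁ s α)) * cc s := by
    intro s hs
    have hrs : HasDerivAt (fun y => r s y) (fderivWithin ℝ R S (s, x₁ s α) ((0:ℝ),(1:ℝ)))
        (x₁ s α) := hsecX R hR s (x₁ s α) hs.1 hs.2.le
    have hls : HasDerivAt (fun y => l s y) (fderivWithin ℝ Ll S (s, x₁ s α) ((0:ℝ),(1:ℝ)))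
        (x₁ s α) := hsecX Ll hL s (x₁ s α) hs.1 hs.2.le
    have hkd : HasDerivAt k (deriv k (r s (x₁ s α) - l s (x₁ s α)))
        (r s (x₁ s α) - l s (x₁ s α)) :=
      ((hk1.differentiable one_ne_zero) _).hasDerivAt
    have hKsec : HasDerivAt (fun y => K (s, y))
        (deriv k (r s (x₁ s α) - l s (x₁ s α)) *
          (fderivWithin ℝ R S (s, x₁ s α) ((0:ℝ),(1:ℝ)) -
           fderivWithin ℝ Ll S (s, x₁ s α) ((0:ℝ),(1:ℝ)))) (x₁ s α) :=
      hkd.comp (x₁ s α) (hrs.sub hls)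
    have hKsec2 : HasDerivAt (fun y => K (s, y))
        (fderivWithin ℝ K S (s, x₁ s α) ((0:ℝ),(1:ℝ))) (x₁ s α) :=
      hsecX K hKc s (x₁ s α) hs.1 hs.2.le
    have huniq := hKsec.unique hKsec2
    have e1 : cc s = fderivWithin ℝ X S (s, α) ((0:ℝ),(1:ℝ)) :=
      (hXa s ⟨hs.1, hs.2.le⟩ α).deriv
    have e2 : deriv (fun y => r s y) (x₁ s α)
        = fderivWithin ℝ R S (s, x₁ s α) ((0:ℝ),(1:ℝ)) := hrs.deriv
    have e3 : deriv (fun y => l s y) (x₁ s α)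
        = fderivWithin ℝ Ll S (s, x₁ s α) ((0:ℝ),(1:ℝ)) := hls.deriv
    have e4 : r s (x₁ s α) - l s (x₁ s α) = η s := by
      rw [hrconst α s ⟨hs.1.le, hs.2.le⟩]
    show fderivWithin ℝ K S (s, x₁ s α) ((0:ℝ),(1:ℝ)) *
        fderivWithin ℝ X S (s, α) ((0:ℝ),(1:ℝ)) = _
    rw [← huniq, e4, ← e1, ← e2, ← e3]
  -- the quantity G = cc / sqrt (k ∘ η)
  set G : ℝ → ℝ := fun u => cc u / Real.sqrt (k (η u)) with hGdef
  have hsqc : ContinuousOn (fun u => Real.sqrt (k (η u))) (Icc 0 t) :=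
    Real.continuous_sqrt.comp_continuousOn (hk1.continuous.comp_continuousOn hηc)
  have hGc : ContinuousOn G (Icc 0 t) :=
    hccc.div hsqc (fun u _ => (hksq (η u)).ne')
  have hwc : ContinuousOn (fun u => deriv r₀ α * fk k (η u)) (Icc 0 t) := by
    apply continuousOn_const.mul
    apply ContinuousOn.div
    · exact (hk1.continuous_deriv le_rfl).comp_continuousOn hηc
    · exact hsqc
    · exact fun u _ => (hksq (η u)).ne'
  have hGd : ∀ s ∈ Ioo (0:ℝ) t, HasDerivAt G (deriv r₀ α * fk k (η s)) s := by
    intro s hs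
    have hη' := hηd s hs
    have hkd : HasDerivAt k (deriv k (η s)) (η s) :=
      ((hk1.differentiable one_ne_zero) _).hasDerivAt
    have hcomp1 : HasDerivAt (fun u => k (η u))
        (deriv k (η s) * -(2 * k (η s) * deriv (fun y => l s y) (x₁ s α))) s :=
      hkd.comp s hη'
    have hsqrt : HasDerivAt (fun u => Real.sqrt (k (η u)))
        (1 / (2 * Real.sqrt (k (η s))) *
          (deriv k (η s) * -(2 * k (η s) * deriv (fun y => l s y) (x₁ s α)))) s :=
      (Real.hasDerivAt_sqrt (hkpos (η s)).ne').comp s hcomp1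
    have hdiv := (hccd s hs).div hsqrt (hksq (η s)).ne'
    have hval : (F' s α * Real.sqrt (k (η s)) -
        cc s * (1 / (2 * Real.sqrt (k (η s))) *
          (deriv k (η s) * -(2 * k (η s) * deriv (fun y => l s y) (x₁ s α))))) /
        (Real.sqrt (k (η s))) ^ 2 = deriv r₀ α * fk k (η s) := by
      have hq2 : Real.sqrt (k (η s)) ^ 2 = k (η s) := Real.sq_sqrt (hkpos (η s)).le
      have hqne : Real.sqrt (k (η s)) ≠ 0 := (hksq (η s)).ne'
      rw [e_Kx s hs, fk]
      have h2 : deriv (fun y => r s y) (x₁ s α) * cc s * deriv k (η s) *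
          Real.sqrt (k (η s)) ^ 3 = deriv r₀ α * deriv k (η s) *
          Real.sqrt (k (η s)) ^ 3 := by rw [e_rx s hs]
      generalize hQ : Real.sqrt (k (η s)) = q at hq2 hqne ⊢
      rw [← e_rx s hs, ← hq2]
      field_simp
      ring
    rw [hval] at hdiv
    exact hdiv
  -- fundamental theorem of calculus for G
  have hmain := ftcAux htpos hGc hwc hGd
  have hG0 : G 0 = 1 / Real.sqrt (k (2 * r₀ α)) := by
    have hη0 : η 0 = 2 * r₀ α := by
      show r₀ α - l 0 (x₁ 0 α) = 2 * r₀ α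
      rw [h0, hil]; ring
    rw [hGdef]
    show cc 0 / Real.sqrt (k (η 0)) = 1 / Real.sqrt (k (2 * r₀ α))
    rw [hcc0, hη0]
  have hpull : (∫ τ in (0:ℝ)..t, deriv r₀ α * fk k (η τ))
      = deriv r₀ α * ∫ τ in (0:ℝ)..t, fk k (η τ) :=
    intervalIntegral.integral_const_mul _ _
  rw [hG0, hpull] at hmain
  -- conclude
  have hGt : G t = cc t / Real.sqrt (k (η t)) := rfl
  rw [hGt] at hmain
  have hccT : cc t = deriv (fun a => x₁ t a) α := rfl
  have hqtne : Real.sqrt (k (η t)) ≠ 0 := (hksq (η t)).ne'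
  have hq2ne : Real.sqrt (k (2 * r₀ α)) ≠ 0 := (hksq (2 * r₀ α)).ne'
  have hgoal : deriv (fun a => x₁ t a) α =
      Real.sqrt (k (η t) / k (2 * r₀ α)) *
        (1 + deriv r₀ α * Real.sqrt (k (2 * r₀ α)) * ∫ τ in (0:ℝ)..t, fk k (η τ)) := by
    rw [← hccT, Real.sqrt_div (hkpos (η t)).le]
    field_simp at hmain ⊢
    linear_combination hmain
  exact hgoal



/-- explicit formulae for the infinitesimal compression ratios
`c₁ = ∂x₁/∂α` and `c₂ = ∂x₂/∂β` of the forward and backward characteristic families of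
the diagonal Riemann-invariant system. -/
theorem infinitesimal_compression_ratios_formulae
    (tstar : EReal) (htstar : 0 < tstar)
    (k : ℝ → ℝ) (hk : ∀ u : ℝ, k (-(2 * L u)) = Real.sqrt (1 + u ^ 2))
    (hk1 : ContDiff ℝ 1 k) (hkge : ∀ η, 1 ≤ k η)
    (r l : ℝ → ℝ → ℝ)
    (hrl : ContDiffOn ℝ 1 (fun p : ℝ × ℝ => (r p.1 p.2, l p.1 p.2))
      {p : ℝ × ℝ | 0 ≤ p.1 ∧ (p.1 : EReal) < tstar})
    (hsys : ∀ t x : ℝ, 0 ≤ t → (t : EReal) < tstar →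
      deriv (fun s => r s x) t + k (r t x - l t x) * deriv (fun y => r t y) x = 0 ∧
      deriv (fun s => l s x) t - k (r t x - l t x) * deriv (fun y => l t y) x = 0)
    (r₀ : ℝ → ℝ) (hr₀ : ContDiff ℝ 1 r₀)
    (hir : ∀ x, r 0 x = r₀ x) (hil : ∀ x, l 0 x = -(r₀ x))
    (x₁ x₂ : ℝ → ℝ → ℝ)
    (hx₁ode : ∀ (α t : ℝ), 0 ≤ t → (t : EReal) < tstar →
      HasDerivAt (fun s => x₁ s α) (k (r t (x₁ t α) - l t (x₁ t α))) t)
    (hx₁0 : ∀ α, x₁ 0 α = α)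
    (hx₂ode : ∀ (β t : ℝ), 0 ≤ t → (t : EReal) < tstar →
      HasDerivAt (fun s => x₂ s β) (-(k (r t (x₂ t β) - l t (x₂ t β)))) t)
    (hx₂0 : ∀ β, x₂ 0 β = β)
    (hx₁C : ContDiffOn ℝ 1 (fun p : ℝ × ℝ => x₁ p.1 p.2)
      {p : ℝ × ℝ | 0 ≤ p.1 ∧ (p.1 : EReal) < tstar})
    (hx₂C : ContDiffOn ℝ 1 (fun p : ℝ × ℝ => x₂ p.1 p.2)
      {p : ℝ × ℝ | 0 ≤ p.1 ∧ (p.1 : EReal) < tstar})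
    (hx₁mix : ContinuousOn
      (fun p : ℝ × ℝ => deriv (fun s => deriv (fun a => x₁ s a) p.2) p.1)
      {p : ℝ × ℝ | 0 ≤ p.1 ∧ (p.1 : EReal) < tstar})
    (hx₂mix : ContinuousOn
      (fun p : ℝ × ℝ => deriv (fun s => deriv (fun b => x₂ s b) p.2) p.1)
      {p : ℝ × ℝ | 0 ≤ p.1 ∧ (p.1 : EReal) < tstar}) :
    ∀ t α β : ℝ, 0 ≤ t → (t : EReal) < tstar →
      deriv (fun a => x₁ t a) α =
        Real.sqrt (k (r₀ α - l t (x₁ t α)) / k (2 * r₀ α)) *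
          (1 + deriv r₀ α * Real.sqrt (k (2 * r₀ α)) *
            ∫ τ in (0 : ℝ)..t, fk k (r₀ α - l τ (x₁ τ α))) ∧
      deriv (fun b => x₂ t b) β =
        Real.sqrt (k (r t (x₂ t β) - (-(r₀ β))) / k (2 * r₀ β)) *
          (1 + deriv (fun y => -(r₀ y)) β * Real.sqrt (k (2 * r₀ β)) *
            ∫ τ in (0 : ℝ)..t, fk k (r τ (x₂ τ β) - (-(r₀ β)))) := by
  intro t α β ht0 htlt
  constructor
  · exact fwd tstar k hk1 hkge r l hrl hsys r₀ hr₀ hir hil x₁ hx₁ode hx₁0 hx₁C t α ht0 htlt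
  · -- reflected system
    set S : Set (ℝ × ℝ) := {p : ℝ × ℝ | 0 ≤ p.1 ∧ (p.1 : EReal) < tstar} with hSdef
    have hNmaps : MapsTo (fun p : ℝ × ℝ => ((p.1, -p.2) : ℝ × ℝ)) S S := fun p hp => hp
    have hNcd : ContDiff ℝ 1 (fun p : ℝ × ℝ => ((p.1, -p.2) : ℝ × ℝ)) :=
      contDiff_fst.prodMk contDiff_snd.neg
    have h1 : ContDiffOn ℝ 1
        (fun p : ℝ × ℝ => (r p.1 (-p.2), l p.1 (-p.2))) S :=
      hrl.comp hNcd.contDiffOn hNmaps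
    have hrlT : ContDiffOn ℝ 1
        (fun p : ℝ × ℝ => (-(l p.1 (-p.2)), -(r p.1 (-p.2)))) S :=
      (contDiff_snd.neg.prodMk contDiff_fst.neg).comp_contDiffOn h1
    have hsysT : ∀ t x : ℝ, 0 ≤ t → (t : EReal) < tstar →
        deriv (fun s => -(l s (-x))) t +
          k (-(l t (-x)) - -(r t (-x))) * deriv (fun y => -(l t (-y))) x = 0 ∧
        deriv (fun s => -(r s (-x))) t -
          k (-(l t (-x)) - -(r t (-x))) * deriv (fun y => -(r t (-y))) x = 0 := by
      intro t x h1' h2'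
      obtain ⟨ha, hb⟩ := hsys t (-x) h1' h2'
      have e3 : k (-(l t (-x)) - -(r t (-x))) = k (r t (-x) - l t (-x)) := by
        rw [neg_sub_neg]
      constructor
      · have e1 : deriv (fun s => -(l s (-x))) t = -(deriv (fun s => l s (-x)) t) :=
          deriv.neg
        have e2 : deriv (fun y => -(l t (-y))) x = deriv (fun y => l t y) (-x) := by
          rw [deriv.fun_neg, deriv_comp_neg, neg_neg]
        rw [e1, e2, e3]
        linarith [hb]
      · have e1 : deriv (fun s => -(r s (-x))) t = -(deriv (fun s => r s (-x)) t) :=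
          deriv.neg
        have e2 : deriv (fun y => -(r t (-y))) x = deriv (fun y => r t y) (-x) := by
          rw [deriv.fun_neg, deriv_comp_neg, neg_neg]
        rw [e1, e2, e3]
        linarith [ha]
      
    have hr₀T : ContDiff ℝ 1 (fun x : ℝ => r₀ (-x)) := hr₀.comp (contDiff_id.neg)
    have hirT : ∀ x : ℝ, -(l 0 (-x)) = r₀ (-x) := by
      intro x; rw [hil, neg_neg]
    have hilT : ∀ x : ℝ, -(r 0 (-x)) = -(r₀ (-x)) := by
      intro x; rw [hir]
    have hodeT : ∀ (b t' : ℝ), 0 ≤ t' → (t' : EReal) < tstar →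
        HasDerivAt (fun s => -(x₂ s (-b)))
          (k (-(l t' (-(-(x₂ t' (-b))))) - -(r t' (-(-(x₂ t' (-b))))))) t' := by
      intro b t' h1' h2'
      have := (hx₂ode (-b) t' h1' h2').fun_neg
      simpa [sub_eq_add_neg, add_comm] using this
    have h0T : ∀ b : ℝ, -(x₂ 0 (-b)) = b := by
      intro b; rw [hx₂0, neg_neg]
    have hCT : ContDiffOn ℝ 1 (fun p : ℝ × ℝ => -(x₂ p.1 (-p.2))) S :=
      (hx₂C.comp hNcd.contDiffOn hNmaps).neg
    have H2 := fwd tstar k hk1 hkge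
      (fun t x => -(l t (-x))) (fun t x => -(r t (-x))) hrlT hsysT
      (fun x => r₀ (-x)) hr₀T hirT hilT
      (fun t b => -(x₂ t (-b))) hodeT h0T hCT t (-β) ht0 htlt
    simp only [neg_neg] at H2
    have eL : deriv (fun a => -(x₂ t (-a))) (-β) = deriv (fun b => x₂ t b) β := by
      rw [deriv.fun_neg, deriv_comp_neg]
      simp
    have eR0 : deriv (fun x : ℝ => r₀ (-x)) (-β) = deriv (fun y => -(r₀ y)) β := by
      rw [deriv_comp_neg, neg_neg, deriv.fun_neg]
    rw [eL, eR0] at H2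
    have eArg : ∀ τ y : ℝ, r τ y - -(r₀ β) = r₀ β - -(r τ y) := by
      intro τ y; ring
    simp only [eArg]
    exact H2
end

section
/- Let t* ∈ (0,∞], let (r,ℓ) be a C¹ solution on [0,t*)×ℝ of the diagonal system ∂ₜr + k(r−ℓ)·∂ₓr = 0, ∂ₜℓ − k(r−ℓ)·∂ₓℓ = 0 with initial data r(0,·) = r₀, ℓ(0,·) = −r₀, where r₀ is C¹, and let x₁, x₂ be C¹ forward and backward characteristic families (∂ₜx₁(t,α) = k(r−ℓ)(t,x₁(t,α)), x₁(0,α) = α; ∂ₜx₂(t,β) = −k(r−ℓ)(t,x₂(t,β)), x₂(0,β) = β) with continuous mixed second partial derivatives. Then the infinitesimal compression ratios are strictly positive on the whole maximal interval: c₁(t,α) := ∂x₁/∂α(t,α) > 0 and c₂(t,β) := ∂x₂/∂β(t,β) > 0 for every t ∈ [0,t*) and every α, β ∈ ℝ. -/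
open Filter

open MeasureTheory intervalIntegral Set in
/-- Partial derivative in the second variable, as a genuine one–dimensional
derivative, obtained from `ContDiffOn` on a set that contains full horizontal
lines. -/
private lemma line_hasDerivAt {S : Set (ℝ × ℝ)}
    (hS1 : ∀ t u y : ℝ, (t, u) ∈ S → (t, y) ∈ S)
    {F : ℝ × ℝ → ℝ} (hF : ContDiffOn ℝ 1 F S) {t u : ℝ} (h : (t, u) ∈ S) :
    HasDerivAt (fun y => F (t, y)) (fderivWithin ℝ F S (t, u) (0, 1)) u := by
  have hd := (hF.differentiableOn one_ne_zero (t, u) h).hasFDerivWithinAt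
  have hline : HasDerivWithinAt (fun y : ℝ => ((t, y) : ℝ × ℝ)) ((0 : ℝ), (1 : ℝ))
      Set.univ u := ((hasDerivAt_const u t).prodMk (hasDerivAt_id u)).hasDerivWithinAt
  have hcomp := hd.comp_hasDerivWithinAt u hline (fun y _ => hS1 t u y h)
  rw [hasDerivWithinAt_univ] at hcomp
  exact hcomp

private lemma uniqueDiffOn_strip (tstar : EReal) (htstar : 0 < tstar) :
    UniqueDiffOn ℝ {p : ℝ × ℝ | 0 ≤ p.1 ∧ (p.1 : EReal) < tstar} := by
  induction tstar using EReal.rec with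
  | bot => exact absurd htstar (by simp)
  | coe b =>
      have : {p : ℝ × ℝ | 0 ≤ p.1 ∧ (p.1 : EReal) < (b : EReal)}
          = Set.Ico 0 b ×ˢ Set.univ := by
        ext p
        simp [Set.mem_Ico, EReal.coe_lt_coe_iff, and_assoc]
      rw [this]
      exact (uniqueDiffOn_Ico 0 b).prod uniqueDiffOn_univ
  | top =>
      have : {p : ℝ × ℝ | 0 ≤ p.1 ∧ (p.1 : EReal) < (⊤ : EReal)}
          = Set.Ici 0 ×ˢ Set.univ := by
        ext p
        simp [EReal.coe_lt_top]
      rw [this]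
      exact (uniqueDiffOn_Ici 0).prod uniqueDiffOn_univ

set_option maxHeartbeats 2000000 in
open MeasureTheory intervalIntegral Set Interval in
/-- The key abstract lemma: for a characteristic family `x` of the ODE
`∂ₜ x = Λ(t, x)` with `x 0 α = α`, jointly `C¹`, the derivative `∂x/∂α`
is strictly positive on `[0, t*)`. -/
private lemma aux_pos (tstar : EReal) (htstar : 0 < tstar)
    (Λ : ℝ × ℝ → ℝ)
    (hΛ : ContDiffOn ℝ 1 Λ {p : ℝ × ℝ | 0 ≤ p.1 ∧ (p.1 : EReal) < tstar})
    (x : ℝ → ℝ → ℝ)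
    (hxC : ContDiffOn ℝ 1 (fun p : ℝ × ℝ => x p.1 p.2)
      {p : ℝ × ℝ | 0 ≤ p.1 ∧ (p.1 : EReal) < tstar})
    (hx0 : ∀ α, x 0 α = α)
    (hode : ∀ (α t : ℝ), 0 ≤ t → (t : EReal) < tstar →
      HasDerivAt (fun s => x s α) (Λ (t, x t α)) t) :
    ∀ t α : ℝ, 0 ≤ t → (t : EReal) < tstar → 0 < deriv (fun a => x t a) α := by
  intro t₀ α₀ h0 hlt
  set S : Set (ℝ × ℝ) := {p : ℝ × ℝ | 0 ≤ p.1 ∧ (p.1 : EReal) < tstar} with hSdef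
  have hS1 : ∀ t u y : ℝ, (t, u) ∈ S → (t, y) ∈ S := fun t u y h => h
  have US : UniqueDiffOn ℝ S := uniqueDiffOn_strip tstar htstar
  have memS : ∀ {t y : ℝ}, 0 ≤ t → (t : EReal) < tstar → (t, y) ∈ S :=
    fun h1 h2 => ⟨h1, h2⟩
  have hmemIcc : ∀ {s : ℝ}, s ∈ Icc 0 t₀ → 0 ≤ s ∧ (s : EReal) < tstar := by
    intro s hs
    exact ⟨hs.1, lt_of_le_of_lt (EReal.coe_le_coe_iff.mpr hs.2) hlt⟩
  set X : ℝ × ℝ → ℝ := fun p => x p.1 p.2 with hXdef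
  set c : ℝ × ℝ → ℝ := fun p => fderivWithin ℝ X S p (0, 1) with hcdef
  set a2 : ℝ × ℝ → ℝ := fun p => fderivWithin ℝ Λ S p (0, 1) with ha2def
  -- partial derivatives as genuine derivatives
  have F1 : ∀ {t u : ℝ}, (t, u) ∈ S → HasDerivAt (fun y => x t y) (c (t, u)) u :=
    fun h => line_hasDerivAt hS1 hxC h
  have F2 : ∀ {t u : ℝ}, (t, u) ∈ S → HasDerivAt (fun y => Λ (t, y)) (a2 (t, u)) u :=
    fun h => line_hasDerivAt hS1 hΛ h
  -- continuity facts
  have cc : ContinuousOn c S := by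
    exact (hxC.continuousOn_fderivWithin US le_rfl).clm_apply continuousOn_const
  have ca2 : ContinuousOn a2 S := by
    exact (hΛ.continuousOn_fderivWithin US le_rfl).clm_apply continuousOn_const
  have hmapsIcc : ∀ α : ℝ, MapsTo (fun s : ℝ => ((s, α) : ℝ × ℝ)) (Icc 0 t₀) S := by
    intro α s hs
    exact memS (hmemIcc hs).1 (hmemIcc hs).2
  have hxcontIcc : ∀ α : ℝ, ContinuousOn (fun s => x s α) (Icc 0 t₀) := by
    intro α
    exact hxC.continuousOn.comp ((continuous_id.prodMk continuous_const).continuousOn)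
      (hmapsIcc α)
  have hcurve : ∀ α : ℝ, ContinuousOn (fun s : ℝ => ((s, x s α) : ℝ × ℝ)) (Icc 0 t₀) :=
    fun α => continuousOn_id.prodMk (hxcontIcc α)
  have hcurveS : ∀ α : ℝ, MapsTo (fun s : ℝ => ((s, x s α) : ℝ × ℝ)) (Icc 0 t₀) S := by
    intro α s hs
    exact memS (hmemIcc hs).1 (hmemIcc hs).2
  have hΛcont : ∀ α : ℝ, ContinuousOn (fun s => Λ (s, x s α)) (Icc 0 t₀) :=
    fun α => hΛ.continuousOn.comp (hcurve α) (hcurveS α)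
  -- the integral representation of the characteristics
  have hInt_rep : ∀ (α : ℝ), ∀ t ∈ Icc (0:ℝ) t₀,
      x t α = α + ∫ s in (0:ℝ)..t, Λ (s, x s α) := by
    intro α t ht
    have h1 : ∀ u ∈ uIcc (0:ℝ) t, HasDerivAt (fun s => x s α) (Λ (u, x u α)) u := by
      intro u hu
      rw [uIcc_of_le ht.1] at hu
      have hu' : u ∈ Icc (0:ℝ) t₀ := ⟨hu.1, hu.2.trans ht.2⟩
      exact hode α u (hmemIcc hu').1 (hmemIcc hu').2
    have h2 : IntervalIntegrable (fun s => Λ (s, x s α)) volume 0 t := by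
      apply ContinuousOn.intervalIntegrable
      apply (hΛcont α).mono
      rw [uIcc_of_le ht.1]
      exact Icc_subset_Icc le_rfl ht.2
    have h3 := integral_eq_sub_of_hasDerivAt h1 h2
    rw [hx0] at h3
    linarith
  -- compact bound for the derivative of the integrand
  set φ : ℝ × ℝ → ℝ := fun p => a2 (p.1, x p.1 p.2) * c p with hφdef
  have hφcont : ContinuousOn φ S := by
    apply ContinuousOn.mul _ cc
    apply ca2.comp (continuousOn_fst.prodMk hxC.continuousOn)
    intro p hp
    exact memS hp.1 hp.2
  set K : Set (ℝ × ℝ) := Icc (0:ℝ) t₀ ×ˢ Icc (α₀ - 1) (α₀ + 1) with hKdef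
  have hKS : K ⊆ S := by
    intro p hp
    exact memS (hmemIcc hp.1).1 (hmemIcc hp.1).2
  obtain ⟨C, hC⟩ := (isCompact_Icc.prod isCompact_Icc).exists_bound_of_continuousOn
    (hφcont.mono hKS)
  -- continuity of φ along vertical/curve lines
  have hφcont₀ : ContinuousOn (fun s => φ (s, α₀)) (Icc 0 t₀) :=
    hφcont.comp ((continuous_id.prodMk continuous_const).continuousOn) (hmapsIcc α₀)
  -- INT : the Volterra integral equation for g
  have hINT : ∀ t ∈ Icc (0:ℝ) t₀,
      c (t, α₀) = 1 + ∫ s in (0:ℝ)..t, φ (s, α₀) := by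
    intro t ht
    have hIoc : Ι (0:ℝ) t ⊆ Icc (0:ℝ) t₀ := by
      rw [uIoc_of_le ht.1]
      exact (Ioc_subset_Icc_self).trans (Icc_subset_Icc le_rfl ht.2)
    have hF_meas : ∀ᶠ α in nhds α₀,
        AEStronglyMeasurable (fun s => Λ (s, x s α)) (volume.restrict (Ι (0:ℝ) t)) := by
      apply Filter.Eventually.of_forall
      intro α
      exact ((hΛcont α).mono hIoc).aestronglyMeasurable measurableSet_uIoc
    have hF_int : IntervalIntegrable (fun s => Λ (s, x s α₀)) volume 0 t := by
      apply ContinuousOn.intervalIntegrable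
      apply (hΛcont α₀).mono
      rw [uIcc_of_le ht.1]
      exact Icc_subset_Icc le_rfl ht.2
    have hF'_meas : AEStronglyMeasurable (fun s => φ (s, α₀))
        (volume.restrict (Ι (0:ℝ) t)) :=
      (hφcont₀.mono hIoc).aestronglyMeasurable measurableSet_uIoc
    have h_bound : ∀ᵐ s ∂(volume : Measure ℝ), s ∈ Ι (0:ℝ) t →
        ∀ α ∈ Metric.ball α₀ 1, ‖φ (s, α)‖ ≤ C := by
      apply MeasureTheory.ae_of_all
      intro s hs α hα
      apply hC
      constructor
      · exact hIoc hs
      · have : |α - α₀| < 1 := by simpa [Real.dist_eq] using hα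
        rw [abs_lt] at this
        constructor <;> linarith [this.1, this.2]
    have h_diff : ∀ᵐ s ∂(volume : Measure ℝ), s ∈ Ι (0:ℝ) t →
        ∀ α ∈ Metric.ball α₀ 1, HasDerivAt (fun α => Λ (s, x s α)) (φ (s, α)) α := by
      apply MeasureTheory.ae_of_all
      intro s hs α _
      have hsIcc : s ∈ Icc (0:ℝ) t₀ := hIoc hs
      have hs1 : (s, α) ∈ S := memS (hmemIcc hsIcc).1 (hmemIcc hsIcc).2
      have hs2 : (s, x s α) ∈ S := memS (hmemIcc hsIcc).1 (hmemIcc hsIcc).2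
      have h1 : HasDerivAt (fun y => Λ (s, y)) (a2 (s, x s α)) (x s α) := F2 hs2
      have h2 : HasDerivAt (fun α => x s α) (c (s, α)) α := F1 hs1
      exact h1.comp α h2
    have hD := (intervalIntegral.hasDerivAt_integral_of_dominated_loc_of_deriv_le
      (F := fun α s => Λ (s, x s α)) (F' := fun α s => φ (s, α))
      (bound := fun _ => C) (μ := volume) (a := 0) (b := t) (x₀ := α₀)
      (Metric.ball_mem_nhds α₀ one_pos) hF_meas hF_int hF'_meas h_bound
      (intervalIntegrable_const) h_diff).2
    have hL : HasDerivAt (fun α => x t α) (1 + ∫ s in (0:ℝ)..t, φ (s, α₀)) α₀ := by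
      have hfe : (fun α => x t α) = fun α => α + ∫ s in (0:ℝ)..t, Λ (s, x s α) :=
        funext fun α => hInt_rep α t ht
      rw [hfe]
      exact (hasDerivAt_id α₀).add hD
    have hR : HasDerivAt (fun α => x t α) (c (t, α₀)) α₀ :=
      F1 (memS (hmemIcc ht).1 (hmemIcc ht).2)
    exact hR.unique hL
  -- positivity via the exponential integrating factor
  set g : ℝ → ℝ := fun s => c (s, α₀) with hgdef
  have hgcont : ContinuousOn g (Icc 0 t₀) :=
    cc.comp ((continuous_id.prodMk continuous_const).continuousOn) (hmapsIcc α₀)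
  have hacont : ContinuousOn (fun s => a2 (s, x s α₀)) (Icc 0 t₀) :=
    ca2.comp (hcurve α₀) (hcurveS α₀)
  set proj : ℝ → ℝ := fun s => max 0 (min s t₀) with hprojdef
  have hproj_cont : Continuous proj := continuous_const.max (continuous_id.min continuous_const)
  have hproj_mem : ∀ s, proj s ∈ Icc (0:ℝ) t₀ :=
    fun s => ⟨le_max_left _ _, max_le h0 (min_le_right _ _)⟩
  have hproj_eq : ∀ {s : ℝ}, s ∈ Icc (0:ℝ) t₀ → proj s = s := by
    intro s hs
    simp only [hprojdef]
    rw [min_eq_left hs.2, max_eq_right hs.1]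
  set atil : ℝ → ℝ := fun s => a2 (proj s, x (proj s) α₀) with hatil
  set gtil : ℝ → ℝ := fun s => g (proj s) with hgtil
  have hatilc : Continuous atil := hacont.comp_continuous hproj_cont hproj_mem
  have hgtilc : Continuous gtil := hgcont.comp_continuous hproj_cont hproj_mem
  set H : ℝ → ℝ := fun u => ∫ s in (0:ℝ)..u, atil s with hHdef
  have hH : ∀ u, HasDerivAt H (atil u) u :=
    fun u => (hatilc.integral_hasStrictDerivAt 0 u).hasDerivAt
  set G : ℝ → ℝ := fun u => 1 + ∫ s in (0:ℝ)..u, atil s * gtil s with hGdef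
  have hG : ∀ u, HasDerivAt G (atil u * gtil u) u := by
    intro u
    have := (hasDerivAt_const u 1).add
      (((hatilc.mul hgtilc).integral_hasStrictDerivAt 0 u).hasDerivAt)
    rw [zero_add] at this
    exact this
  have hGg : ∀ u ∈ Icc (0:ℝ) t₀, G u = g u := by
    intro u hu
    have h1 := hINT u hu
    have h2 : (∫ s in (0:ℝ)..u, atil s * gtil s) = ∫ s in (0:ℝ)..u, φ (s, α₀) := by
      apply intervalIntegral.integral_congr
      intro s hs
      rw [uIcc_of_le hu.1] at hs
      have hs' : s ∈ Icc (0:ℝ) t₀ := ⟨hs.1, hs.2.trans hu.2⟩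
      simp only [hatil, hgtil, hφdef, hgdef, hproj_eq hs']
    rw [hGdef]
    simp only []
    rw [h2, ← h1]
  set E : ℝ → ℝ := fun u => G u * Real.exp (-(H u)) with hEdef
  have hE : ∀ u ∈ Icc (0:ℝ) t₀, HasDerivAt E 0 u := by
    intro u hu
    have h2 : HasDerivAt (fun w => Real.exp (-(H w))) (Real.exp (-(H u)) * (-(atil u))) u :=
      ((hH u).neg).exp
    have h3 := (hG u).mul h2
    have h4 : gtil u = G u := by
      rw [hgtil]
      simp only []
      rw [hproj_eq hu, hGg u hu]
    have h5 : HasDerivAt E (atil u * gtil u * Real.exp (-(H u)) +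
        G u * (Real.exp (-(H u)) * (-(atil u)))) u := h3
    convert h5 using 1
    rw [h4]
    ring
  have hEcont : ContinuousOn E (Icc 0 t₀) := by
    intro u hu
    exact ((hE u hu).differentiableAt.continuousAt).continuousWithinAt
  have hEconst := constant_of_has_deriv_right_zero hEcont
    (fun u hu => (hE u (Ico_subset_Icc_self hu)).hasDerivWithinAt) t₀
    ⟨h0, le_rfl⟩
  have hE0 : E 0 = 1 := by
    simp [hEdef, hGdef, hHdef, intervalIntegral.integral_same]
  have hGpos : 0 < G t₀ := by
    have h1 : G t₀ * Real.exp (-(H t₀)) = 1 := by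
      have h2 : E t₀ = 1 := by rw [hEconst]; exact hE0
      exact h2
    nlinarith [Real.exp_pos (-(H t₀))]
  have hR : HasDerivAt (fun a => x t₀ a) (c (t₀, α₀)) α₀ := F1 (memS h0 hlt)
  have hfin : G t₀ = c (t₀, α₀) := hGg t₀ ⟨h0, le_rfl⟩
  rw [hR.deriv, ← hfin]
  exact hGpos

/-- strict positivity of the infinitesimal compression ratios
`c₁ = ∂x₁/∂α` and `c₂ = ∂x₂/∂β` of the characteristic families of
the diagonal Riemann-invariant system. -/
theorem infinitesimal_compression_ratios_pos
    (tstar : EReal) (htstar : 0 < tstar)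
    (k : ℝ → ℝ) (hk : ∀ u : ℝ, k (-(2 * L u)) = Real.sqrt (1 + u ^ 2))
    (hk1 : ContDiff ℝ 1 k) (hkge : ∀ η, 1 ≤ k η)
    (r l : ℝ → ℝ → ℝ)
    (hrl : ContDiffOn ℝ 1 (fun p : ℝ × ℝ => (r p.1 p.2, l p.1 p.2))
      {p : ℝ × ℝ | 0 ≤ p.1 ∧ (p.1 : EReal) < tstar})
    (hsys : ∀ t x : ℝ, 0 ≤ t → (t : EReal) < tstar →
      deriv (fun s => r s x) t + k (r t x - l t x) * deriv (fun y => r t y) x = 0 ∧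
      deriv (fun s => l s x) t - k (r t x - l t x) * deriv (fun y => l t y) x = 0)
    (r₀ : ℝ → ℝ) (hr₀ : ContDiff ℝ 1 r₀)
    (hir : ∀ x, r 0 x = r₀ x) (hil : ∀ x, l 0 x = -(r₀ x))
    (x₁ x₂ : ℝ → ℝ → ℝ)
    (hx₁ode : ∀ (α t : ℝ), 0 ≤ t → (t : EReal) < tstar →
      HasDerivAt (fun s => x₁ s α) (k (r t (x₁ t α) - l t (x₁ t α))) t)
    (hx₁0 : ∀ α, x₁ 0 α = α)
    (hx₂ode : ∀ (β t : ℝ), 0 ≤ t → (t : EReal) < tstar →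
      HasDerivAt (fun s => x₂ s β) (-(k (r t (x₂ t β) - l t (x₂ t β)))) t)
    (hx₂0 : ∀ β, x₂ 0 β = β)
    (hx₁C : ContDiffOn ℝ 1 (fun p : ℝ × ℝ => x₁ p.1 p.2)
      {p : ℝ × ℝ | 0 ≤ p.1 ∧ (p.1 : EReal) < tstar})
    (hx₂C : ContDiffOn ℝ 1 (fun p : ℝ × ℝ => x₂ p.1 p.2)
      {p : ℝ × ℝ | 0 ≤ p.1 ∧ (p.1 : EReal) < tstar})
    (hx₁mix : ContinuousOn
      (fun p : ℝ × ℝ => deriv (fun s => deriv (fun a => x₁ s a) p.2) p.1)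
      {p : ℝ × ℝ | 0 ≤ p.1 ∧ (p.1 : EReal) < tstar})
    (hx₂mix : ContinuousOn
      (fun p : ℝ × ℝ => deriv (fun s => deriv (fun b => x₂ s b) p.2) p.1)
      {p : ℝ × ℝ | 0 ≤ p.1 ∧ (p.1 : EReal) < tstar}) :
    ∀ t α β : ℝ, 0 ≤ t → (t : EReal) < tstar →
      0 < deriv (fun a => x₁ t a) α ∧ 0 < deriv (fun b => x₂ t b) β := by
  have hΛ : ContDiffOn ℝ 1 (fun p : ℝ × ℝ => k (r p.1 p.2 - l p.1 p.2))
      {p : ℝ × ℝ | 0 ≤ p.1 ∧ (p.1 : EReal) < tstar} := by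
    have h1 : ContDiffOn ℝ 1 (fun p : ℝ × ℝ => r p.1 p.2 - l p.1 p.2)
        {p : ℝ × ℝ | 0 ≤ p.1 ∧ (p.1 : EReal) < tstar} := by
      have := (contDiff_fst.sub contDiff_snd).comp_contDiffOn hrl
      simpa [Function.comp_def] using this
    have := hk1.comp_contDiffOn h1
    simpa [Function.comp_def] using this
  intro t α β h0 hlt
  constructor
  · exact aux_pos tstar htstar (fun p : ℝ × ℝ => k (r p.1 p.2 - l p.1 p.2)) hΛ
      x₁ hx₁C hx₁0 (fun α t ht hlt' => hx₁ode α t ht hlt') t α h0 hlt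
  · exact aux_pos tstar htstar (fun p : ℝ × ℝ => -(k (r p.1 p.2 - l p.1 p.2))) hΛ.neg
      x₂ hx₂C hx₂0 (fun β t ht hlt' => hx₂ode β t ht hlt') t β h0 hlt
end

section
/- Let r₀ : ℝ → ℝ be C¹, bounded, with bounded derivative, and suppose the limit r₀(+∞) := lim_{x→+∞} r₀(x) exists and is finite, and that there exists α ∈ ℝ with r₀'(α)·( r₀(α) + r₀(+∞) ) < 0; or suppose the limit r₀(−∞) := lim_{x→−∞} r₀(x) exists and is finite and there exists β ∈ ℝ with r₀'(β)·( r₀(β) + r₀(−∞) ) > 0. Then the diagonal system ∂ₜr + k(r−ℓ)·∂ₓr = 0, ∂ₜℓ − k(r−ℓ)·∂ₓℓ = 0 with data r(0,·) = r₀, ℓ(0,·) = −r₀ admits no global smooth solution: there do not exist a C¹ solution (r,ℓ) on all of [0,∞)×ℝ together with C¹ forward and backward characteristic families x₁, x₂ (with continuous mixed second partials, ∂ₜx₁ = k(r−ℓ)∘x₁, ∂ₜx₂ = −k(r−ℓ)∘x₂, x₁(0,α') = α', x₂(0,β') = β') and C¹ intersection functions β(t,α'), α(t,β') satisfying x₁(t,α')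 = x₂(t, β(t,α')) and x₂(t,β') = x₁(t, α(t,β')) for all t ≥ 0 and all α', β' ∈ ℝ. -/
open Filter

lemma sqrt_pos' (u : ℝ) : 0 < Real.sqrt (1 + u ^ 2) :=
  Real.sqrt_pos.2 (by positivity)

lemma one_le_sqrt' (u : ℝ) : 1 ≤ Real.sqrt (1 + u ^ 2) := by
  rw [Real.le_sqrt one_pos.le (by positivity)]
  nlinarith [sq_nonneg u]

lemma hasDerivAt_L (u : ℝ) : HasDerivAt L (Real.sqrt (1 + u ^ 2)) u := by
  have hs : HasDerivAt (fun u : ℝ => Real.sqrt (1 + u ^ 2)) (u / Real.sqrt (1 + u ^ 2)) u := by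
    have h1 : HasDerivAt (fun u : ℝ => 1 + u ^ 2) (2 * u) u := by
      simpa using ((hasDerivAt_pow 2 u).const_add 1)
    have := (Real.hasDerivAt_sqrt (x := 1 + u ^ 2) (by positivity)).comp u h1
    refine this.congr_deriv ?_
    field_simp
  have hprod : HasDerivAt (fun u : ℝ => u * Real.sqrt (1 + u ^ 2))
      (1 * Real.sqrt (1 + u ^ 2) + u * (u / Real.sqrt (1 + u ^ 2))) u :=
    (hasDerivAt_id u).mul hs
  have := (hprod.add (Real.hasDerivAt_arsinh u)).div_const 2
  refine this.congr_deriv ?_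
  have h0 : Real.sqrt (1 + u ^ 2) ≠ 0 := (sqrt_pos' u).ne'
  have hsq : Real.sqrt (1 + u ^ 2) * Real.sqrt (1 + u ^ 2) = 1 + u ^ 2 :=
    Real.mul_self_sqrt (by positivity)
  field_simp
  nlinarith [hsq]

lemma L_strictMono : StrictMono L :=
  strictMono_of_hasDerivAt_pos (f' := fun u => Real.sqrt (1 + u ^ 2))
    hasDerivAt_L (fun u => sqrt_pos' u)

lemma L_odd (u : ℝ) : L (-u) = -L u := by
  simp [L, Real.arsinh_neg, neg_sq]
  ring

lemma L_ge_half (u : ℝ) (hu : 0 ≤ u) : u / 2 ≤ L u := by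
  have h1 : u * 1 ≤ u * Real.sqrt (1 + u ^ 2) :=
    mul_le_mul_of_nonneg_left (one_le_sqrt' u) hu
  have h2 : 0 ≤ Real.arsinh u := Real.arsinh_nonneg_iff.2 hu
  simp only [L]
  linarith

lemma L_surj : Function.Surjective L := by
  have hc : Continuous L := by
    have : Differentiable ℝ L := fun u => (hasDerivAt_L u).differentiableAt
    exact this.continuous
  have hbound : ∀ᶠ u : ℝ in atTop, u / 2 ≤ L u := by
    filter_upwards [eventually_ge_atTop (0:ℝ)] with u hu using L_ge_half u hu
  have hhalf : Tendsto (fun u : ℝ => u / 2) atTop atTop :=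
    tendsto_id.atTop_div_const (by norm_num)
  have htop : Tendsto L atTop atTop := tendsto_atTop_mono' _ hbound hhalf
  refine hc.surjective htop ?_
  have h1 : Tendsto (fun u : ℝ => L (-u)) atBot atTop := htop.comp tendsto_neg_atBot_atTop
  have h2 : Tendsto (fun u : ℝ => -L (-u)) atBot atBot := tendsto_neg_atTop_atBot.comp h1
  refine h2.congr (fun u => ?_)
  rw [L_odd]; ring

section kfacts
variable {k : ℝ → ℝ} (hk : ∀ u : ℝ, k (-(2 * L u)) = Real.sqrt (1 + u ^ 2))

include hk

lemma k_repr (v : ℝ) : ∃ u : ℝ, -(2 * L u) = v ∧ k v = Real.sqrt (1 + u ^ 2) := by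
  obtain ⟨u, hu⟩ := L_surj (-(v / 2))
  refine ⟨u, by rw [hu]; ring, ?_⟩
  rw [show v = -(2 * L u) by rw [hu]; ring]
  exact hk u

lemma k_ge_one (v : ℝ) : 1 ≤ k v := by
  obtain ⟨u, -, h2⟩ := k_repr hk v
  rw [h2]; exact one_le_sqrt' u

lemma k_lt_of_neg {v₁ v₂ : ℝ} (h12 : v₁ < v₂) (h2 : v₂ < 0) : k v₂ < k v₁ := by
  obtain ⟨u₁, hu₁, e₁⟩ := k_repr hk v₁
  obtain ⟨u₂, hu₂, e₂⟩ := k_repr hk v₂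
  have hL1 : L u₁ = -(v₁ / 2) := by linarith [hu₁]
  have hL2 : L u₂ = -(v₂ / 2) := by linarith [hu₂]
  have h21 : L u₂ < L u₁ := by rw [hL1, hL2]; linarith
  have h20 : L 0 < L u₂ := by
    have : L 0 = 0 := by simp [L, Real.arsinh_zero]
    rw [this, hL2]; linarith
  have hu21 : u₂ < u₁ := L_strictMono.lt_iff_lt.1 h21
  have hu20 : 0 < u₂ := L_strictMono.lt_iff_lt.1 h20
  rw [e₁, e₂]
  apply Real.sqrt_lt_sqrt (by positivity)
  nlinarith

lemma k_lt_of_pos {v₁ v₂ : ℝ} (h2 : 0 < v₂) (h21 : v₂ < v₁) : k v₂ < k v₁ := by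
  obtain ⟨u₁, hu₁, e₁⟩ := k_repr hk v₁
  obtain ⟨u₂, hu₂, e₂⟩ := k_repr hk v₂
  have hL1 : L u₁ = -(v₁ / 2) := by linarith [hu₁]
  have hL2 : L u₂ = -(v₂ / 2) := by linarith [hu₂]
  have h12 : L u₁ < L u₂ := by rw [hL1, hL2]; linarith
  have h20 : L u₂ < L 0 := by
    have : L 0 = 0 := by simp [L, Real.arsinh_zero]
    rw [this, hL2]; linarith
  have hu12 : u₁ < u₂ := L_strictMono.lt_iff_lt.1 h12
  have hu20 : u₂ < 0 := L_strictMono.lt_iff_lt.1 h20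
  rw [e₁, e₂]
  apply Real.sqrt_lt_sqrt (by positivity)
  nlinarith

end kfacts

/-- A quantity `F` satisfying the transport PDE is constant along a curve with speed `v`. -/
lemma const_along {F : ℝ → ℝ → ℝ} {γ v : ℝ → ℝ}
    (hF : ContDiffOn ℝ 1 (fun p : ℝ × ℝ => F p.1 p.2) {p : ℝ × ℝ | 0 ≤ p.1})
    (hγ : ∀ t : ℝ, 0 ≤ t → HasDerivAt γ (v t) t)
    (hPDE : ∀ t : ℝ, 0 ≤ t →
      deriv (fun s => F s (γ t)) t + v t * deriv (fun y => F t y) (γ t) = 0) :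
    ∀ t : ℝ, 0 ≤ t → F t (γ t) = F 0 (γ 0) := by
  set S : Set (ℝ × ℝ) := {p : ℝ × ℝ | 0 ≤ p.1} with hS
  set φ : ℝ → ℝ := fun t => F t (γ t) with hφ
  -- derivative of φ is 0 for t > 0
  have hφ' : ∀ t : ℝ, 0 < t → HasDerivAt φ 0 t := by
    intro t ht
    have hmem : S ∈ nhds ((t, γ t) : ℝ × ℝ) := by
      have hopen : IsOpen {p : ℝ × ℝ | 0 < p.1} := isOpen_lt continuous_const continuous_fst
      exact mem_nhds_iff.2 ⟨{p : ℝ × ℝ | 0 < p.1}, fun p hp => le_of_lt (show (0:ℝ) < p.1 from hp), hopen, ht⟩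
    have hdiff : DifferentiableAt ℝ (fun p : ℝ × ℝ => F p.1 p.2) (t, γ t) :=
      (hF.differentiableOn one_ne_zero).differentiableAt hmem
    obtain ⟨G, hG⟩ : ∃ G : ℝ × ℝ →L[ℝ] ℝ, HasFDerivAt (fun p : ℝ × ℝ => F p.1 p.2) G (t, γ t) :=
      ⟨_, hdiff.hasFDerivAt⟩
    have hcurve : HasDerivAt (fun s => ((s, γ s) : ℝ × ℝ)) (1, v t) t :=
      (hasDerivAt_id t).prodMk (hγ t ht.le)
    have hcomp : HasDerivAt φ (G (1, v t)) t := by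
      have h := hG.comp_hasDerivAt t hcurve; exact h
    -- identify partial derivatives
    have hpt : HasDerivAt (fun s => F s (γ t)) (G (1, 0)) t := by
      have hcurve2 : HasDerivAt (fun s => ((s, γ t) : ℝ × ℝ)) (1, 0) t :=
        (hasDerivAt_id t).prodMk (hasDerivAt_const t (γ t))
      exact hG.comp_hasDerivAt t hcurve2
    have hpx : HasDerivAt (fun y => F t y) (G (0, 1)) (γ t) := by
      have hcurve3 : HasDerivAt (fun y => ((t, y) : ℝ × ℝ)) (0, 1) (γ t) :=
        (hasDerivAt_const (γ t) t).prodMk (hasDerivAt_id (γ t))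
      exact hG.comp_hasDerivAt (γ t) hcurve3
    have hsplit : G (1, v t) = G (1, 0) + v t * G (0, 1) := by
      have : ((1 : ℝ), v t) = ((1:ℝ), (0:ℝ)) + v t • ((0:ℝ), (1:ℝ)) := by
        simp [Prod.ext_iff]
      rw [this, map_add, map_smul, smul_eq_mul]
    have hval : G (1, v t) = 0 := by
      rw [hsplit, ← hpt.deriv, ← hpx.deriv]
      exact hPDE t ht.le
    rw [hval] at hcomp
    exact hcomp
  -- φ continuous on [0, ∞)
  have hγc : ContinuousOn γ (Set.Ici (0:ℝ)) := fun t ht =>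
    (hγ t ht).continuousAt.continuousWithinAt
  have hφc : ContinuousOn φ (Set.Ici (0:ℝ)) := by
    have hcur : ContinuousOn (fun t => ((t, γ t) : ℝ × ℝ)) (Set.Ici (0:ℝ)) :=
      (continuousOn_id).prodMk hγc
    have hmaps : Set.MapsTo (fun t => ((t, γ t) : ℝ × ℝ)) (Set.Ici (0:ℝ)) S :=
      fun t ht => ht
    exact (hF.continuousOn).comp hcur hmaps
  intro t ht
  rcases eq_or_lt_of_le ht with h | h
  · rw [← h]
  -- φ is constant on (0, t]
  have hconst : ∀ ε : ℝ, 0 < ε → ε ≤ t → φ ε = φ t := by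
    intro ε hε hεt
    have := constant_of_has_deriv_right_zero (f := φ) (a := ε) (b := t)
      (hφc.mono (by intro s hs; exact le_of_lt (lt_of_lt_of_le hε hs.1)))
      (fun s hs => ((hφ' s (lt_of_lt_of_le hε hs.1)).hasDerivWithinAt))
    have h2 := this t ⟨hεt, le_refl t⟩
    exact h2.symm
  -- take limit ε → 0⁺
  have hne : (nhdsWithin (0:ℝ) (Set.Ioi 0)).NeBot := by infer_instance
  have htend : Tendsto φ (nhdsWithin (0:ℝ) (Set.Ioi 0)) (nhds (φ 0)) := by
    have := (hφc 0 (by simp)).tendsto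
    exact this.mono_left (nhdsWithin_mono _ (fun s hs => Set.mem_Ici.2 (le_of_lt hs)))
  have heq : ∀ᶠ ε in nhdsWithin (0:ℝ) (Set.Ioi 0), φ ε = φ t := by
    filter_upwards [Ioo_mem_nhdsGT_of_mem (Set.left_mem_Ico.2 h)] with ε hε
    exact hconst ε hε.1 hε.2.le
  have : Tendsto φ (nhdsWithin (0:ℝ) (Set.Ioi 0)) (nhds (φ t)) :=
    Tendsto.congr' (heq.mono (fun x hx => hx.symm)) tendsto_const_nhds
  exact (tendsto_nhds_unique htend this).symm

/-- A curve with derivative `≥ 1` on `[0,∞)` satisfies `γ 0 + t ≤ γ t`. -/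
lemma curve_lower {γ v : ℝ → ℝ} (hγ : ∀ t : ℝ, 0 ≤ t → HasDerivAt γ (v t) t)
    (hv : ∀ t : ℝ, 0 ≤ t → 1 ≤ v t) : ∀ t : ℝ, 0 ≤ t → γ 0 + t ≤ γ t := by
  set g : ℝ → ℝ := fun t => γ t - t with hg
  have hmono : MonotoneOn g (Set.Ici (0:ℝ)) := by
    apply monotoneOn_of_deriv_nonneg (convex_Ici 0)
    · exact fun t ht => (((hγ t ht).sub (hasDerivAt_id t)).continuousAt).continuousWithinAt
    · intro t ht
      rw [interior_Ici] at ht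
      exact (((hγ t (le_of_lt ht)).sub (hasDerivAt_id t)).differentiableAt).differentiableWithinAt
    · intro t ht
      rw [interior_Ici] at ht
      have hgd : HasDerivAt g (v t - 1) t := by
        exact (hγ t (le_of_lt ht)).sub (hasDerivAt_id t)
      rw [hgd.deriv]
      linarith [hv t (le_of_lt ht)]
  intro t ht
  have := hmono (Set.self_mem_Ici) ht ht
  simp only [hg] at this
  linarith [this]

/-- Two curves, the left one eventually faster, must cross. -/
lemma must_cross {γ₁ γ₂ v₁ v₂ : ℝ → ℝ} {k₁ k₂ : ℝ}
    (h₁ : ∀ t : ℝ, 0 ≤ t → HasDerivAt γ₁ (v₁ t) t)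
    (h₂ : ∀ t : ℝ, 0 ≤ t → HasDerivAt γ₂ (v₂ t) t)
    (hv₁ : Tendsto v₁ atTop (nhds k₁)) (hv₂ : Tendsto v₂ atTop (nhds k₂))
    (hlt : k₂ < k₁) (h0 : γ₁ 0 < γ₂ 0) : ∃ t : ℝ, 0 ≤ t ∧ γ₁ t = γ₂ t := by
  obtain ⟨δ, hδ⟩ : ∃ δ : ℝ, δ = k₁ - k₂ := ⟨_, rfl⟩
  have hδpos : 0 < δ := by rw [hδ]; linarith
  set D : ℝ → ℝ := fun t => γ₂ t - γ₁ t with hD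
  have hD' : ∀ t : ℝ, 0 ≤ t → HasDerivAt D (v₂ t - v₁ t) t :=
    fun t ht => (h₂ t ht).sub (h₁ t ht)
  -- eventually the speed difference is below -δ/2
  have hevent : ∀ᶠ t in atTop, v₂ t - v₁ t < -(δ / 2) := by
    have h2 : Tendsto (fun t => v₂ t - v₁ t) atTop (nhds (k₂ - k₁)) := hv₂.sub hv₁
    exact h2.eventually_lt_const (by rw [hδ]; linarith)
  obtain ⟨T₀, hT₀⟩ := eventually_atTop.1 hevent
  obtain ⟨T, hT⟩ : ∃ T : ℝ, T = max T₀ 0 := ⟨_, rfl⟩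
  have hTnn : 0 ≤ T := hT ▸ le_max_right _ _
  have hspeed : ∀ t : ℝ, T ≤ t → v₂ t - v₁ t < -(δ / 2) :=
    fun t htt => hT₀ t (le_trans (hT ▸ le_max_left T₀ 0) htt)
  -- g is antitone on [T, ∞)
  set g : ℝ → ℝ := fun t => D t + (δ / 2) * t with hg
  have hanti : AntitoneOn g (Set.Ici T) := by
    apply antitoneOn_of_deriv_nonpos (convex_Ici T)
    · intro t htt
      exact (((hD' t (le_trans hTnn htt)).add
        ((hasDerivAt_id t).const_mul (δ / 2))).continuousAt).continuousWithinAt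
    · intro t htt
      rw [interior_Ici] at htt
      exact (((hD' t (le_trans hTnn (le_of_lt htt))).add
        ((hasDerivAt_id t).const_mul (δ / 2))).differentiableAt).differentiableWithinAt
    · intro t htt
      rw [interior_Ici] at htt
      have hgd : HasDerivAt g (v₂ t - v₁ t + δ / 2) t := by
        refine HasDerivAt.congr_deriv ((hD' t (le_trans hTnn (le_of_lt htt))).add
          ((hasDerivAt_id t).const_mul (δ / 2))) ?_
        ring
      rw [hgd.deriv]
      have := hspeed t (le_of_lt htt)
      linarith
  clear_value D g
  -- choose a time where D is negative
  obtain ⟨M, hM⟩ : ∃ M : ℝ, M = (2 / δ) * |D T| + 1 := ⟨_, rfl⟩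
  have hMpos : 0 < M := by rw [hM]; positivity
  have hDneg : D (T + M) < 0 := by
    have h1 : g (T + M) ≤ g T := hanti Set.self_mem_Ici (by simp [le_of_lt hMpos]) (by linarith)
    have h2 : D T ≤ |D T| := le_abs_self _
    have h3 : (δ / 2) * M = |D T| + δ / 2 := by
      rw [hM]
      field_simp
    simp only [hg] at h1
    have h4 : δ / 2 * (T + M) = δ / 2 * T + δ / 2 * M := by ring
    have h5 : D (T + M) ≤ D T - δ / 2 * M := by linarith
    have h6 : D T - δ / 2 * M = D T - |D T| - δ / 2 := by rw [h3]; ring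
    have h7 : 0 < δ / 2 := by positivity
    rw [h6] at h5
    linarith
  -- IVT
  have hcont : ContinuousOn D (Set.Icc 0 (T + M)) :=
    fun t htt => ((hD' t htt.1).continuousAt).continuousWithinAt
  have hsub := intermediate_value_Icc' (by linarith : (0:ℝ) ≤ T + M) hcont
  have h0mem : (0:ℝ) ∈ Set.Icc (D (T + M)) (D 0) := by
    constructor
    · exact le_of_lt hDneg
    · simp only [hD]; linarith
  obtain ⟨t, htmem, htval⟩ := hsub h0mem
  refine ⟨t, htmem.1, ?_⟩
  simp only [hD] at htval
  linarith

/-- From a nonzero derivative, pick a nearby point with controlled strict change. -/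
lemma pick_right {f : ℝ → ℝ} {a d P : ℝ} (hf : HasDerivAt f d a) (hc : ContinuousAt f a)
    (hd : 0 < d) (hP : 0 < P) : ∃ b : ℝ, a < b ∧ f a < f b ∧ |f b - f a| < P := by
  have hslope : Tendsto (slope f a) (nhdsWithin a {a}ᶜ) (nhds d) :=
    hasDerivAt_iff_tendsto_slope.1 hf
  have hslope' : Tendsto (slope f a) (nhdsWithin a (Set.Ioi a)) (nhds d) :=
    hslope.mono_left (nhdsWithin_mono _ (fun x hx => ne_of_gt hx))
  have h1 : ∀ᶠ b in nhdsWithin a (Set.Ioi a), 0 < slope f a b :=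
    hslope'.eventually_const_lt hd
  have h2 : ∀ᶠ b in nhdsWithin a (Set.Ioi a), |f b - f a| < P := by
    have : Tendsto (fun b => |f b - f a|) (nhdsWithin a (Set.Ioi a)) (nhds |f a - f a|) := by
      apply Tendsto.abs
      exact ((hc.tendsto.mono_left nhdsWithin_le_nhds).sub tendsto_const_nhds)
    simp only [sub_self, abs_zero] at this
    exact this.eventually_lt_const hP
  have h3 : ∀ᶠ b in nhdsWithin a (Set.Ioi a), b ∈ Set.Ioi a := self_mem_nhdsWithin
  obtain ⟨b, hb1, hb2, hb3⟩ := (h1.and (h2.and h3)).exists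
  refine ⟨b, hb3, ?_, hb2⟩
  have hba : 0 < b - a := sub_pos.2 hb3
  rw [slope_def_field] at hb1
  have := mul_pos hb1 hba
  rw [div_mul_cancel₀ _ (ne_of_gt hba)] at this
  linarith
/-- Variant of `pick_right` for negative derivative. -/
lemma pick_right' {f : ℝ → ℝ} {a d P : ℝ} (hf : HasDerivAt f d a) (hc : ContinuousAt f a)
    (hd : d < 0) (hP : 0 < P) : ∃ b : ℝ, a < b ∧ f b < f a ∧ |f b - f a| < P := by
  obtain ⟨b, h1, h2, h3⟩ := pick_right (f := fun x => -f x) hf.neg hc.neg (by linarith) hP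
  refine ⟨b, h1, by simpa using h2, ?_⟩
  have he : -f b - -f a = -(f b - f a) := by ring
  rwa [he, abs_neg] at h3

/-- under the breakdown condition on the initial Riemann invariant `r₀`,
the diagonal system admits no global C¹ solution on `[0,∞)×ℝ` equipped with C¹
characteristic families and C¹ intersection functions. -/
theorem no_global_smooth_solution
    (k : ℝ → ℝ) (hk : ∀ u : ℝ, k (-(2 * L u)) = Real.sqrt (1 + u ^ 2))
    (hk1 : ContDiff ℝ 1 k)
    (r₀ : ℝ → ℝ) (hr₀ : ContDiff ℝ 1 r₀)
    (hr₀b : ∃ C : ℝ, ∀ x, |r₀ x| ≤ C) (hr₀'b : ∃ C : ℝ, ∀ x, |deriv r₀ x| ≤ C)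
    (hcond :
      (∃ rp : ℝ, Tendsto r₀ atTop (nhds rp) ∧
        ∃ α : ℝ, deriv r₀ α * (r₀ α + rp) < 0) ∨
      (∃ rm : ℝ, Tendsto r₀ atBot (nhds rm) ∧
        ∃ β : ℝ, deriv r₀ β * (r₀ β + rm) > 0)) :
    ¬ ∃ r l x₁ x₂ B A : ℝ → ℝ → ℝ,
      ContDiffOn ℝ 1 (fun p : ℝ × ℝ => (r p.1 p.2, l p.1 p.2))
          {p : ℝ × ℝ | 0 ≤ p.1} ∧
      (∀ t x : ℝ, 0 ≤ t →
        deriv (fun s => r s x) t + k (r t x - l t x) * deriv (fun y => r t y) x = 0 ∧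
        deriv (fun s => l s x) t - k (r t x - l t x) * deriv (fun y => l t y) x = 0) ∧
      (∀ x, r 0 x = r₀ x) ∧ (∀ x, l 0 x = -(r₀ x)) ∧
      (∀ (α t : ℝ), 0 ≤ t →
        HasDerivAt (fun s => x₁ s α) (k (r t (x₁ t α) - l t (x₁ t α))) t) ∧
      (∀ α, x₁ 0 α = α) ∧
      (∀ (β t : ℝ), 0 ≤ t →
        HasDerivAt (fun s => x₂ s β) (-(k (r t (x₂ t β) - l t (x₂ t β)))) t) ∧
      (∀ β, x₂ 0 β = β) ∧
      ContDiffOn ℝ 1 (fun p : ℝ × ℝ => x₁ p.1 p.2) {p : ℝ × ℝ | 0 ≤ p.1} ∧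
      ContDiffOn ℝ 1 (fun p : ℝ × ℝ => x₂ p.1 p.2) {p : ℝ × ℝ | 0 ≤ p.1} ∧
      ContinuousOn
        (fun p : ℝ × ℝ => deriv (fun s => deriv (fun a => x₁ s a) p.2) p.1)
        {p : ℝ × ℝ | 0 ≤ p.1} ∧
      ContinuousOn
        (fun p : ℝ × ℝ => deriv (fun s => deriv (fun b => x₂ s b) p.2) p.1)
        {p : ℝ × ℝ | 0 ≤ p.1} ∧
      ContDiffOn ℝ 1 (fun p : ℝ × ℝ => B p.1 p.2) {p : ℝ × ℝ | 0 ≤ p.1} ∧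
      ContDiffOn ℝ 1 (fun p : ℝ × ℝ => A p.1 p.2) {p : ℝ × ℝ | 0 ≤ p.1} ∧
      (∀ (t α : ℝ), 0 ≤ t → x₁ t α = x₂ t (B t α)) ∧
      (∀ (t β : ℝ), 0 ≤ t → x₂ t β = x₁ t (A t β)) := by
  rintro ⟨r, l, x₁, x₂, B, A, hC, hPDE, hr0, hl0, hx₁ode, hx₁0, hx₂ode, hx₂0,
    hx₁C, hx₂C, hm1, hm2, hBC, hAC, hB, hA⟩
  -- components of the joint regularity
  have hrC : ContDiffOn ℝ 1 (fun p : ℝ × ℝ => r p.1 p.2) {p : ℝ × ℝ | 0 ≤ p.1} :=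
    contDiff_fst.comp_contDiffOn hC
  have hlC : ContDiffOn ℝ 1 (fun p : ℝ × ℝ => l p.1 p.2) {p : ℝ × ℝ | 0 ≤ p.1} :=
    contDiff_snd.comp_contDiffOn hC
  -- Riemann invariants are constant along their characteristics
  have hrconst : ∀ a t : ℝ, 0 ≤ t → r t (x₁ t a) = r₀ a := by
    intro a t ht
    have h := const_along (F := r) (γ := fun s => x₁ s a)
      (v := fun t => k (r t (x₁ t a) - l t (x₁ t a))) hrC
      (fun t ht => hx₁ode a t ht)
      (fun t ht => (hPDE t (x₁ t a) ht).1) t ht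
    have h' : r t (x₁ t a) = r 0 (x₁ 0 a) := h
    rw [h', hx₁0 a, hr0]
  have hlconst : ∀ b t : ℝ, 0 ≤ t → l t (x₂ t b) = -(r₀ b) := by
    intro b t ht
    have h := const_along (F := l) (γ := fun s => x₂ s b)
      (v := fun t => -(k (r t (x₂ t b) - l t (x₂ t b)))) hlC
      (fun t ht => hx₂ode b t ht)
      (fun t ht => by have h2 := (hPDE t (x₂ t b) ht).2; linear_combination h2) t ht
    have h' : l t (x₂ t b) = l 0 (x₂ 0 b) := h
    rw [h', hx₂0 b, hl0]
  -- lower/upper bounds on characteristics since k ≥ 1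
  have hx₁low : ∀ a t : ℝ, 0 ≤ t → a + t ≤ x₁ t a := by
    intro a t ht
    have h := curve_lower (γ := fun s => x₁ s a)
      (v := fun t => k (r t (x₁ t a) - l t (x₁ t a)))
      (fun t ht => hx₁ode a t ht) (fun t _ => k_ge_one hk _) t ht
    have h' : x₁ 0 a + t ≤ x₁ t a := h
    rwa [hx₁0 a] at h'
  have hx₂up : ∀ b t : ℝ, 0 ≤ t → x₂ t b ≤ b - t := by
    intro b t ht
    have h := curve_lower (γ := fun s => -(x₂ s b))
      (v := fun t => k (r t (x₂ t b) - l t (x₂ t b)))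
      (fun t ht => by have h := (hx₂ode b t ht).neg; rw [neg_neg] at h; exact h) (fun t _ => k_ge_one hk _) t ht
    have h' : -(x₂ 0 b) + t ≤ -(x₂ t b) := h
    rw [hx₂0 b] at h'
    linarith
  rcases hcond with ⟨rp, hrp, α, hα⟩ | ⟨rm, hrm, β, hβ⟩
  · -- forward case
    have hBbound : ∀ a t : ℝ, 0 ≤ t → a + 2 * t ≤ B t a := by
      intro a t ht
      have h1 : a + t ≤ x₁ t a := hx₁low a t ht
      have h2 : x₂ t (B t a) ≤ B t a - t := hx₂up (B t a) t ht
      have h3 : x₁ t a = x₂ t (B t a) := hB t a ht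
      have h4 : x₁ t a ≤ B t a - t := by rw [h3]; exact h2
      linarith
    have hBtop : ∀ a : ℝ, Tendsto (fun t => B t a) atTop atTop := by
      intro a
      have hlin : Tendsto (fun t : ℝ => a + 2 * t) atTop atTop :=
        tendsto_atTop_add_const_left _ a (tendsto_id.const_mul_atTop (by norm_num))
      refine tendsto_atTop_mono' _ ?_ hlin
      filter_upwards [eventually_ge_atTop (0:ℝ)] with t ht using hBbound a t ht
    have hspeed : ∀ a t : ℝ, 0 ≤ t →
        HasDerivAt (fun s => x₁ s a) (k (r₀ a + r₀ (B t a))) t := by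
      intro a t ht
      have h := hx₁ode a t ht
      have e1 : r t (x₁ t a) = r₀ a := hrconst a t ht
      have e2 : l t (x₁ t a) = -(r₀ (B t a)) := by
        rw [hB t a ht]; exact hlconst (B t a) t ht
      rw [e1, e2, sub_neg_eq_add] at h
      exact h
    have hasym : ∀ a : ℝ, Tendsto (fun t => k (r₀ a + r₀ (B t a))) atTop
        (nhds (k (r₀ a + rp))) := by
      intro a
      have h1 : Tendsto (fun t => r₀ (B t a)) atTop (nhds rp) := hrp.comp (hBtop a)
      have h2 : Tendsto (fun t => r₀ a + r₀ (B t a)) atTop (nhds (r₀ a + rp)) :=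
        tendsto_const_nhds.add h1
      exact (hk1.continuous.tendsto _).comp h2
    -- pick the second characteristic
    have hrd : HasDerivAt r₀ (deriv r₀ α) α := ((hr₀.differentiable one_ne_zero) α).hasDerivAt
    have hrc : ContinuousAt r₀ α := hr₀.continuous.continuousAt
    have hsum : r₀ α + rp ≠ 0 := by
      intro h; rw [h, mul_zero] at hα; exact lt_irrefl 0 hα
    have hdd : deriv r₀ α ≠ 0 := by
      intro h; rw [h, zero_mul] at hα; exact lt_irrefl 0 hα
    obtain ⟨b, hab, hval, hdiff, hklt⟩ :
        ∃ b : ℝ, α < b ∧ r₀ α ≠ r₀ b ∧ True ∧ k (r₀ b + rp) < k (r₀ α + rp) := by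
      rcases lt_or_gt_of_ne hdd with hneg | hpos
      · -- deriv < 0, hence r₀ α + rp > 0
        have hsp : 0 < r₀ α + rp := by nlinarith
        obtain ⟨b, h1, h2, h3⟩ := pick_right' hrd hrc hneg hsp
        refine ⟨b, h1, ne_of_gt h2, trivial, ?_⟩
        have hb2 : 0 < r₀ b + rp := by
          obtain ⟨hl, hr⟩ := abs_lt.1 h3; linarith
        exact k_lt_of_pos hk hb2 (by linarith)
      · -- deriv > 0, hence r₀ α + rp < 0
        have hsp : r₀ α + rp < 0 := by nlinarith
        obtain ⟨b, h1, h2, h3⟩ := pick_right hrd hrc hpos (show 0 < -(r₀ α + rp) by linarith)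
        refine ⟨b, h1, ne_of_lt h2, trivial, ?_⟩
        have hb2 : r₀ b + rp < 0 := by
          obtain ⟨hl, hr⟩ := abs_lt.1 h3; linarith
        exact k_lt_of_neg hk (by linarith) hb2
    obtain ⟨t, ht, heq⟩ := must_cross (γ₁ := fun s => x₁ s α) (γ₂ := fun s => x₁ s b)
      (v₁ := fun t => k (r₀ α + r₀ (B t α))) (v₂ := fun t => k (r₀ b + r₀ (B t b)))
      (fun t ht => hspeed α t ht) (fun t ht => hspeed b t ht)
      (hasym α) (hasym b) hklt (by show x₁ 0 α < x₁ 0 b; rw [hx₁0, hx₁0]; exact hab)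
    have heq' : x₁ t α = x₁ t b := heq
    have : r₀ α = r₀ b := by
      rw [← hrconst α t ht, ← hrconst b t ht, heq']
    exact hval this
  · -- backward case
    have hAbound : ∀ b t : ℝ, 0 ≤ t → A t b ≤ b - 2 * t := by
      intro b t ht
      have h1 : A t b + t ≤ x₁ t (A t b) := hx₁low (A t b) t ht
      have h2 : x₂ t b ≤ b - t := hx₂up b t ht
      have h3 : x₂ t b = x₁ t (A t b) := hA t b ht
      have h4 : A t b + t ≤ b - t := by rw [← h3] at h1; linarith
      linarith
    have hAbot : ∀ b : ℝ, Tendsto (fun t => A t b) atTop atBot := by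
      intro b
      have h2t : Tendsto (fun t : ℝ => 2 * t) atTop atTop :=
        tendsto_id.const_mul_atTop (by norm_num)
      have hneg2t : Tendsto (fun t : ℝ => -(2 * t)) atTop atBot :=
        tendsto_neg_atTop_atBot.comp h2t
      have hlin : Tendsto (fun t : ℝ => b + -(2 * t)) atTop atBot :=
        tendsto_atBot_add_const_left _ b hneg2t
      refine tendsto_atBot_mono' _ ?_ hlin
      filter_upwards [eventually_ge_atTop (0:ℝ)] with t ht
      have := hAbound b t ht
      linarith
    have hspeed : ∀ b t : ℝ, 0 ≤ t →
        HasDerivAt (fun s => x₂ s b) (-(k (r₀ (A t b) + r₀ b))) t := by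
      intro b t ht
      have h := hx₂ode b t ht
      have e1 : r t (x₂ t b) = r₀ (A t b) := by
        rw [hA t b ht]; exact hrconst (A t b) t ht
      have e2 : l t (x₂ t b) = -(r₀ b) := hlconst b t ht
      rw [e1, e2, sub_neg_eq_add] at h
      exact h
    have hasym : ∀ b : ℝ, Tendsto (fun t => -(k (r₀ (A t b) + r₀ b))) atTop
        (nhds (-(k (rm + r₀ b)))) := by
      intro b
      have h1 : Tendsto (fun t => r₀ (A t b)) atTop (nhds rm) := hrm.comp (hAbot b)
      have h2 : Tendsto (fun t => r₀ (A t b) + r₀ b) atTop (nhds (rm + r₀ b)) :=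
        h1.add tendsto_const_nhds
      exact ((hk1.continuous.tendsto _).comp h2).neg
    have hrd : HasDerivAt r₀ (deriv r₀ β) β := ((hr₀.differentiable one_ne_zero) β).hasDerivAt
    have hrc : ContinuousAt r₀ β := hr₀.continuous.continuousAt
    have hdd : deriv r₀ β ≠ 0 := by
      intro h; rw [h, zero_mul] at hβ; exact lt_irrefl 0 hβ
    obtain ⟨b, hab, hval, hklt⟩ :
        ∃ b : ℝ, β < b ∧ r₀ β ≠ r₀ b ∧ k (rm + r₀ β) < k (rm + r₀ b) := by
      rcases lt_or_gt_of_ne hdd with hneg | hpos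
      · -- deriv < 0, hence r₀ β + rm < 0
        have hsp : r₀ β + rm < 0 := by nlinarith
        obtain ⟨b, h1, h2, h3⟩ := pick_right' hrd hrc hneg one_pos
        refine ⟨b, h1, ne_of_gt h2, ?_⟩
        exact k_lt_of_neg hk (by linarith) (by linarith)
      · -- deriv > 0, hence r₀ β + rm > 0
        have hsp : 0 < r₀ β + rm := by nlinarith
        obtain ⟨b, h1, h2, h3⟩ := pick_right hrd hrc hpos one_pos
        refine ⟨b, h1, ne_of_lt h2, ?_⟩
        exact k_lt_of_pos hk (by linarith) (by linarith)
    obtain ⟨t, ht, heq⟩ := must_cross (γ₁ := fun s => x₂ s β) (γ₂ := fun s => x₂ s b)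
      (v₁ := fun t => -(k (r₀ (A t β) + r₀ β))) (v₂ := fun t => -(k (r₀ (A t b) + r₀ b)))
      (fun t ht => hspeed β t ht) (fun t ht => hspeed b t ht)
      (hasym β) (hasym b) (by linarith) (by show x₂ 0 β < x₂ 0 b; rw [hx₂0, hx₂0]; exact hab)
    have heq' : x₂ t β = x₂ t b := heq
    have : -(r₀ β) = -(r₀ b) := by
      rw [← hlconst β t ht, ← hlconst b t ht, heq']
    exact hval (by linarith)
end
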